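/- arXiv:0911.5049 — 8 statements merged into one kernel-verified Lean document; each statement's English description precedes it below -/
import Mathlib

section
/- For n ≥ 1, define S(n) = sup over A in N(n,ℝ) of (inf over T in N(n,ℤ) of max(‖T·A‖_∞, ‖(T·A)⁻¹‖_∞)), where the sup and inf are taken in the extended nonnegative reals [0,∞]. Then S is monotone: for all natural numbers 1 ≤ n ≤ m, S(n) ≤ S(m). -/
open scoped ENNReal

/-- Entrywise maximum absolute value of a square real matrix. -/
noncomputable def maxAbs {m : Type*} [Fintype m] (Y : Matrix m m ℝ) : ℝ :=
  ⨆ i, ⨆ j, |Y i j|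

/-- The set `N(n, R)` of `n × n` lower-triangular matrices over `R` with all
diagonal entries equal to `1`. -/
def unipLower (n : ℕ) (R : Type*) [Zero R] [One R] :
    Set (Matrix (Fin n) (Fin n) R) :=
  {A | (∀ i j : Fin n, i < j → A i j = 0) ∧ ∀ i : Fin n, A i i = 1}

/-- Seysen's quantity
`S(n) = sup_{A ∈ N(n,ℝ)} inf_{T ∈ N(n,ℤ)} max(‖TA‖_∞, ‖(TA)⁻¹‖_∞)`,
computed in the extended nonnegative reals. -/
noncomputable def seysenS (n : ℕ) : ℝ≥0∞ :=
  ⨆ A ∈ unipLower n ℝ, ⨅ T ∈ unipLower n ℤ,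
    ENNReal.ofReal
      (max (maxAbs (T.map (fun x : ℤ => (x : ℝ)) * A))
           (maxAbs (T.map (fun x : ℤ => (x : ℝ)) * A)⁻¹))

open Matrix Finset

namespace SeysenAux

variable {n m : ℕ}

lemma res_mul {R : Type*} [CommRing R] (h : n ≤ m) (B C : Matrix (Fin m) (Fin m) R)
    (hB : ∀ i j : Fin m, i < j → B i j = 0) :
    (B * C).submatrix (Fin.castLE h) (Fin.castLE h)
      = B.submatrix (Fin.castLE h) (Fin.castLE h) * C.submatrix (Fin.castLE h) (Fin.castLE h) := by
  ext i j
  simp only [submatrix_apply, mul_apply]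
  have hinj : Function.Injective (Fin.castLE h) := Fin.castLE_injective h
  set s : Finset (Fin m) := univ.map ⟨Fin.castLE h, hinj⟩ with hs
  have h0 : ∀ k ∈ (univ : Finset (Fin m)), k ∉ s →
      B (Fin.castLE h i) k * C k (Fin.castLE h j) = 0 := by
    intro k _ hk
    simp only [hs, Finset.mem_map, Finset.mem_univ, true_and,
      Function.Embedding.coeFn_mk] at hk
    have hkn : ¬ (k : ℕ) < n := fun hkn => hk ⟨⟨k, hkn⟩, by ext; simp⟩
    have hlt : Fin.castLE h i < k := by
      rw [Fin.lt_def]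
      exact lt_of_lt_of_le i.isLt (not_lt.mp hkn)
    exact mul_eq_zero_of_left (hB _ _ hlt) _
  rw [← Finset.sum_subset (Finset.subset_univ s) h0, hs, Finset.sum_map]
  rfl

lemma mul_mem {R : Type*} [CommRing R] {B C : Matrix (Fin n) (Fin n) R}
    (hB : B ∈ unipLower n R) (hC : C ∈ unipLower n R) : B * C ∈ unipLower n R := by
  constructor
  · intro i j hij
    rw [mul_apply]
    refine Finset.sum_eq_zero fun k _ => ?_
    rcases lt_or_ge i k with hk | hk
    · exact mul_eq_zero_of_left (hB.1 _ _ hk) _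
    · exact mul_eq_zero_of_right _ (hC.1 _ _ (lt_of_le_of_lt hk hij))
  · intro i
    rw [mul_apply]
    rw [Finset.sum_eq_single i (fun k _ hk => ?_) (by simp)]
    · rw [hB.2, hC.2, one_mul]
    · rcases lt_or_gt_of_ne hk with hk | hk
      · exact mul_eq_zero_of_right _ (hC.1 _ _ hk)
      · exact mul_eq_zero_of_left (hB.1 _ _ hk) _

lemma det_eq_one {B : Matrix (Fin n) (Fin n) ℝ} (hB : B ∈ unipLower n ℝ) :
    B.det = 1 := by
  rw [Matrix.det_of_lowerTriangular B (fun i j hij => hB.1 _ _ hij)]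
  simp [hB.2]

lemma inv_mem {B : Matrix (Fin n) (Fin n) ℝ} (hB : B ∈ unipLower n ℝ) :
    B⁻¹ ∈ unipLower n ℝ ∧ B * B⁻¹ = 1 := by
  have hdet : IsUnit B.det := by rw [det_eq_one hB]; exact isUnit_one
  have hmul : B * B⁻¹ = 1 := Matrix.mul_nonsing_inv B hdet
  haveI : Invertible B := B.invertibleOfIsUnitDet hdet
  have htri : B⁻¹.BlockTriangular OrderDual.toDual :=
    Matrix.blockTriangular_inv_of_blockTriangular (fun i j hij => hB.1 _ _ hij)
  have hlow : ∀ i j : Fin n, i < j → B⁻¹ i j = 0 := fun i j hij => htri hij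
  refine ⟨⟨hlow, fun i => ?_⟩, hmul⟩
  have := congrArg (fun M => M i i) hmul
  simp only [Matrix.one_apply_eq, mul_apply] at this
  rw [Finset.sum_eq_single i (fun k _ hk => ?_) (by simp)] at this
  · rwa [hB.2, one_mul] at this
  · rcases lt_or_gt_of_ne hk with hk | hk
    · exact mul_eq_zero_of_right _ (hlow _ _ hk)
    · exact mul_eq_zero_of_left (hB.1 _ _ hk) _

lemma abs_le_maxAbs (Y : Matrix (Fin m) (Fin m) ℝ) (i j : Fin m) :
    |Y i j| ≤ maxAbs Y := by
  have h1 : |Y i j| ≤ ⨆ j, |Y i j| :=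
    le_ciSup (f := fun j => |Y i j|) (Set.Finite.bddAbove (Set.finite_range _)) j
  have h2 : (⨆ j, |Y i j|) ≤ maxAbs Y :=
    le_ciSup (f := fun i => ⨆ j, |Y i j|) (Set.Finite.bddAbove (Set.finite_range _)) i
  exact h1.trans h2

lemma maxAbs_submatrix_le (hn : 1 ≤ n) (h : n ≤ m) (Y : Matrix (Fin m) (Fin m) ℝ) :
    maxAbs (Y.submatrix (Fin.castLE h) (Fin.castLE h)) ≤ maxAbs Y := by
  have : Nonempty (Fin n) := ⟨⟨0, hn⟩⟩
  refine ciSup_le fun i => ciSup_le fun j => ?_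
  exact abs_le_maxAbs Y _ _

/-- block-diagonal extension with identity -/
def extM (h : n ≤ m) (A : Matrix (Fin n) (Fin n) ℝ) : Matrix (Fin m) (Fin m) ℝ :=
  fun i j =>
    if hi : (i : ℕ) < n then
      (if hj : (j : ℕ) < n then A ⟨i, hi⟩ ⟨j, hj⟩ else 0)
    else (if i = j then 1 else 0)

lemma extM_mem (h : n ≤ m) {A : Matrix (Fin n) (Fin n) ℝ} (hA : A ∈ unipLower n ℝ) :
    extM h A ∈ unipLower m ℝ := by
  constructor
  · intro i j hij
    unfold extM
    rcases Nat.lt_or_ge (i : ℕ) n with hi | hi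
    · rcases Nat.lt_or_ge (j : ℕ) n with hj | hj
      · simp only [hi, hj, dif_pos]
        exact hA.1 _ _ hij
      · simp [hi, Nat.not_lt.mpr hj]
    · have : ¬ (i : ℕ) < n := Nat.not_lt.mpr hi
      simp [this, Fin.ne_of_lt hij]
  · intro i
    unfold extM
    rcases Nat.lt_or_ge (i : ℕ) n with hi | hi
    · simp only [hi, dif_pos]
      exact hA.2 _
    · simp [Nat.not_lt.mpr hi]

lemma res_extM (h : n ≤ m) (A : Matrix (Fin n) (Fin n) ℝ) :
    (extM h A).submatrix (Fin.castLE h) (Fin.castLE h) = A := by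
  ext i j
  simp [extM, submatrix_apply, i.isLt, j.isLt]

lemma res_one (h : n ≤ m) :
    (1 : Matrix (Fin m) (Fin m) ℝ).submatrix (Fin.castLE h) (Fin.castLE h) = 1 := by
  ext i j
  simp only [submatrix_apply, Matrix.one_apply]
  by_cases hij : i = j
  · simp [hij]
  · rw [if_neg hij, if_neg (fun hc => hij (Fin.castLE_injective h hc))]

end SeysenAux


/-- The function `S` is monotone: for `1 ≤ n ≤ m`, `S(n) ≤ S(m)`. -/
theorem stmt_1 (n m : ℕ) (hn : 1 ≤ n) (hnm : n ≤ m) :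
    seysenS n ≤ seysenS m := by
  open SeysenAux in
  refine iSup₂_le fun A hA => ?_
  refine le_trans ?_ (le_iSup₂ (extM hnm A) (extM_mem hnm hA))
  refine le_iInf₂ fun T' hT' => ?_
  set c : ℤ → ℝ := fun x : ℤ => (x : ℝ) with hc
  set e := Fin.castLE hnm with he
  set T : Matrix (Fin n) (Fin n) ℤ := T'.submatrix e e with hT'def
  have hT : T ∈ unipLower n ℤ := by
    refine ⟨fun i j hij => hT'.1 _ _ ?_, fun i => hT'.2 _⟩
    rw [Fin.lt_def]
    exact hij
  have hTclow : ∀ i j : Fin m, i < j → (T'.map c) i j = 0 := by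
    intro i j hij
    simp [Matrix.map_apply, hT'.1 _ _ hij, hc]
  have hTc : T'.map c ∈ unipLower m ℝ := by
    refine ⟨hTclow, fun i => ?_⟩
    simp [Matrix.map_apply, hT'.2 i, hc]
  have hTmap : T.map c = (T'.map c).submatrix e e := rfl
  set B : Matrix (Fin m) (Fin m) ℝ := T'.map c * extM hnm A with hBdef
  have hBmem : B ∈ unipLower m ℝ := mul_mem hTc (extM_mem hnm hA)
  have key1 : T.map c * A = B.submatrix e e := by
    rw [hTmap, ← res_extM hnm A, ← res_mul hnm _ _ hTclow]
  have hBinv := inv_mem hBmem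
  have key2 : (T.map c * A)⁻¹ = B⁻¹.submatrix e e := by
    have h1 : B.submatrix e e * B⁻¹.submatrix e e = 1 := by
      rw [← res_mul hnm _ _ (fun i j hij => hBmem.1 _ _ hij), hBinv.2, res_one]
    rw [key1, Matrix.inv_eq_right_inv h1]
  refine iInf₂_le_of_le T hT ?_
  refine ENNReal.ofReal_le_ofReal ?_
  rw [key2, key1]
  exact max_le_max (maxAbs_submatrix_le hn hnm B) (maxAbs_submatrix_le hn hnm B⁻¹)
end

section
/- Let f : ℕ → ℝ be a function satisfying: (i) f(n) ≥ 0 for all n ≥ 1; (ii) f is monotone, i.e. f(n) ≤ f(m) whenever 1 ≤ n ≤ m; (iii) f(1) = 1; and (iv) f(2n) ≤ f(n) · max(1, n/2) for all n ≥ 1. Then for all n ≥ 1, f(n) ≤ exp((ln n)² / (2 ln 2)). -/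
/-- If `f : ℕ → ℝ` is nonnegative on positive integers, monotone there,
satisfies `f 1 = 1` and the doubling inequality `f (2n) ≤ f n * max 1 (n/2)`,
then `f n ≤ exp ((ln n)² / (2 ln 2))` for all `n ≥ 1`. -/
theorem stmt_2 (f : ℕ → ℝ)
    (hnonneg : ∀ n : ℕ, 1 ≤ n → 0 ≤ f n)
    (hmono : ∀ n m : ℕ, 1 ≤ n → n ≤ m → f n ≤ f m)
    (hone : f 1 = 1)
    (hdouble : ∀ n : ℕ, 1 ≤ n → f (2 * n) ≤ f n * max 1 ((n : ℝ) / 2)) :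
    ∀ n : ℕ, 1 ≤ n → f n ≤ Real.exp ((Real.log n) ^ 2 / (2 * Real.log 2)) := by
  have key : ∀ k : ℕ, f (2 ^ (k + 1)) ≤ 2 ^ (k * (k - 1) / 2) := by
    intro k
    induction k with
    | zero =>
      have h := hdouble 1 le_rfl
      rw [hone, one_mul, Nat.cast_one, max_eq_left (by norm_num : (1 : ℝ) / 2 ≤ 1)] at h
      simpa using h
    | succ k ih =>
      have h := hdouble (2 ^ (k + 1)) Nat.one_le_two_pow
      have hmax : max (1 : ℝ) (((2 ^ (k + 1) : ℕ) : ℝ) / 2) = 2 ^ k := by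
        push_cast
        rw [pow_succ, max_eq_right]
        · ring
        · have : (1 : ℝ) ≤ 2 ^ k := by exact_mod_cast Nat.one_le_two_pow (n := k)
          nlinarith
      rw [hmax] at h
      have h2 : (2 : ℕ) * 2 ^ (k + 1) = 2 ^ (k + 1 + 1) := by ring
      rw [h2] at h
      have hstep : f (2 ^ (k + 1 + 1)) ≤ 2 ^ (k * (k - 1) / 2) * 2 ^ k := by
        refine h.trans ?_
        exact mul_le_mul_of_nonneg_right ih (by positivity)
      have harith : (k + 1) * (k + 1 - 1) / 2 = k * (k - 1) / 2 + k := by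
        have h1 : (k + 1) * (k + 1 - 1) = k * (k - 1) + k * 2 := by
          cases k with
          | zero => simp
          | succ j => simp [Nat.succ_sub_one]; ring
        rw [h1, Nat.add_mul_div_right _ _ (by norm_num : 0 < 2)]
      calc f (2 ^ (k + 1 + 1)) ≤ 2 ^ (k * (k - 1) / 2) * 2 ^ k := hstep
        _ = 2 ^ ((k + 1) * (k + 1 - 1) / 2) := by rw [harith, pow_add]
  intro n hn
  rcases eq_or_lt_of_le hn with h1 | h1
  · subst h1
    simp [hone]
  · -- 2 ≤ n
    have hk : 0 < Nat.clog 2 n := Nat.clog_pos one_lt_two h1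
    obtain ⟨m, hm⟩ : ∃ m, Nat.clog 2 n = m + 1 := ⟨_, (Nat.succ_pred_eq_of_pos hk).symm⟩
    have hle : n ≤ 2 ^ (m + 1) := by
      have := Nat.le_pow_clog one_lt_two n
      rwa [hm] at this
    have hlt : 2 ^ m < n := by
      have := Nat.pow_pred_clog_lt_self one_lt_two h1
      rw [hm] at this
      simpa using this
    have h2 : f n ≤ 2 ^ (m * (m - 1) / 2) :=
      le_trans (hmono n (2 ^ (m + 1)) hn hle) (key m)
    refine h2.trans ?_
    have hln2 : 0 < Real.log 2 := Real.log_pos one_lt_two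
    have hlnn : (m : ℝ) * Real.log 2 ≤ Real.log n := by
      have hcast : (2 : ℝ) ^ m ≤ (n : ℝ) := by exact_mod_cast hlt.le
      calc (m : ℝ) * Real.log 2 = Real.log ((2 : ℝ) ^ m) := by rw [Real.log_pow]
        _ ≤ Real.log n := Real.log_le_log (by positivity) hcast
    have h0 : 0 ≤ (m : ℝ) * Real.log 2 := by positivity
    set e : ℕ := m * (m - 1) / 2 with he
    rw [show ((2 : ℝ) ^ e) = Real.exp ((e : ℝ) * Real.log 2) by
      rw [← Real.log_pow, Real.exp_log (by positivity)]]
    rw [Real.exp_le_exp, le_div_iff₀ (by positivity : (0 : ℝ) < 2 * Real.log 2)]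
    have h2e : (2 * e : ℝ) ≤ (m : ℝ) ^ 2 := by
      have hnat : 2 * e ≤ m * m := by
        have := Nat.div_mul_le_self (m * (m - 1)) 2
        have hmm : m * (m - 1) ≤ m * m := Nat.mul_le_mul_left m (Nat.sub_le m 1)
        omega
      have := (Nat.cast_le (α := ℝ)).2 hnat
      push_cast at this
      nlinarith
    have hsq : ((m : ℝ) * Real.log 2) ^ 2 ≤ (Real.log n) ^ 2 := by
      have := mul_self_le_mul_self h0 hlnn
      nlinarith
    nlinarith [sq_nonneg (Real.log 2)]
end

section
/- Let B be an invertible n×n real matrix with rows b_1, …, b_n, all nonzero, write V = D⁻¹·B with D = diag(‖b_1‖, …, ‖b_n‖), and set U = V·Vᵗ. Let λ_1, …, λ_n be the (real, positive) eigenvalues of the symmetric positive definite matrix U. Then S(B) = Σ_{i=1}^n 1/λ_i. -/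
open Matrix

/-- The Seysen measure `S(B) = ∑ i, ‖b_i‖² ‖b_i*‖²` of a basis given by the rows
of `B`, where the dual basis `B* = (B⁻¹)ᵗ` has rows `b_i* = (B⁻¹ · i)`. -/
noncomputable def seysen {n : ℕ} (B : Matrix (Fin n) (Fin n) ℝ) : ℝ :=
  ∑ i, (∑ j, (B i j) ^ 2) * (∑ j, (B⁻¹ j i) ^ 2)

private lemma trace_inv_aux {n : ℕ} (u M : Matrix (Fin n) (Fin n) ℝ) (lam : Fin n → ℝ)
    (huu : star u * u = 1) (huu' : u * star u = 1) (hlam : ∀ i, lam i ≠ 0)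
    (hM : M = u * Matrix.diagonal lam * star u) :
    (M⁻¹).trace = ∑ i, 1 / lam i := by
  have hinv : M⁻¹ = u * Matrix.diagonal (fun i => (lam i)⁻¹) * star u := by
    apply Matrix.inv_eq_right_inv
    rw [hM]
    calc (u * Matrix.diagonal lam * star u) * (u * Matrix.diagonal (fun i => (lam i)⁻¹) * star u)
        = u * (Matrix.diagonal lam * ((star u * u) *
            Matrix.diagonal (fun i => (lam i)⁻¹))) * star u := by
          simp only [Matrix.mul_assoc]
      _ = 1 := by
          rw [huu, one_mul, Matrix.diagonal_mul_diagonal]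
          have : (fun i => lam i * (lam i)⁻¹) = fun _ => (1 : ℝ) :=
            funext fun i => mul_inv_cancel₀ (hlam i)
          rw [this, Matrix.diagonal_one, mul_one, huu']
  rw [hinv, Matrix.trace_mul_cycle, huu, one_mul, Matrix.trace_diagonal]
  simp [one_div]

/-- If `V = D⁻¹·B` with `D = diag(‖b_1‖, …, ‖b_n‖)`, `U = V·Vᵗ` is the
(symmetric positive definite) matrix of pairwise cosines, and
`λ_1, …, λ_n` are its eigenvalues, then `S(B) = ∑ i, 1/λ_i`. -/
theorem stmt_9 (n : ℕ) (B : Matrix (Fin n) (Fin n) ℝ)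
    (hB : IsUnit B.det) (hrows : ∀ i : Fin n, B i ≠ 0)
    (D V U : Matrix (Fin n) (Fin n) ℝ)
    (hD : D = Matrix.diagonal fun i => Real.sqrt (∑ j, (B i j) ^ 2))
    (hV : V = D⁻¹ * B)
    (hU : U = V * Vᵀ)
    (hHerm : U.IsHermitian) :
    seysen B = ∑ i, 1 / hHerm.eigenvalues i := by
  -- row norms are positive
  have hd : ∀ i, 0 < ∑ j, (B i j) ^ 2 := by
    intro i
    obtain ⟨j, hj⟩ : ∃ j, B i j ≠ 0 := by
      by_contra h; push_neg at h; exact hrows i (funext h)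
    exact Finset.sum_pos' (fun j _ => sq_nonneg _)
      ⟨j, Finset.mem_univ j, by positivity⟩
  have hds : ∀ i, Real.sqrt (∑ j, (B i j) ^ 2) ≠ 0 :=
    fun i => (Real.sqrt_pos.mpr (hd i)).ne'
  have hDdet : IsUnit D.det := by
    rw [hD, det_diagonal]
    exact isUnit_iff_ne_zero.mpr (Finset.prod_ne_zero_iff.mpr fun i _ => hds i)
  have hVdet : IsUnit V.det := by
    rw [hV, det_mul, det_nonsing_inv, Ring.inverse_eq_inv']
    exact hDdet.inv.mul hB
  have hUdet : IsUnit U.det := by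
    rw [hU, det_mul, det_transpose]
    exact hVdet.mul hVdet
  have hlam : ∀ i, hHerm.eigenvalues i ≠ 0 := by
    intro i h0
    have hdet := hHerm.det_eq_prod_eigenvalues
    simp only [RCLike.ofReal_real_eq_id, id] at hdet
    rw [hdet] at hUdet
    exact hUdet.ne_zero (Finset.prod_eq_zero (Finset.mem_univ i) h0)
  -- V⁻¹ = B⁻¹ * D
  have hVinv : V⁻¹ = B⁻¹ * D := by
    rw [hV, Matrix.mul_inv_rev, Matrix.nonsing_inv_nonsing_inv _ hDdet]
  -- seysen B = trace U⁻¹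
  have htr : seysen B = (U⁻¹).trace := by
    rw [hU, Matrix.mul_inv_rev, ← Matrix.transpose_nonsing_inv]
    rw [Matrix.trace, Fintype.sum_congr _ _ (fun i => rfl)]
    simp only [Matrix.diag_apply, Matrix.mul_apply, Matrix.transpose_apply]
    rw [seysen]
    refine Finset.sum_congr rfl fun i _ => ?_
    have : ∀ j, V⁻¹ j i = B⁻¹ j i * Real.sqrt (∑ k, (B i k) ^ 2) := by
      intro j
      rw [hVinv, hD, Matrix.mul_diagonal]
    simp only [this]
    rw [Finset.mul_sum]
    refine Finset.sum_congr rfl fun j _ => ?_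
    rw [mul_mul_mul_comm, Real.mul_self_sqrt (le_of_lt (hd i))]
    ring
  rw [htr]
  set u : Matrix (Fin n) (Fin n) ℝ := (hHerm.eigenvectorUnitary : Matrix (Fin n) (Fin n) ℝ)
  have hspec : U = u * Matrix.diagonal (hHerm.eigenvalues) * star u := by
    have := hHerm.spectral_theorem
    simpa only [RCLike.ofReal_real_eq_id, Function.comp_def, id, Unitary.conjStarAlgAut_apply] using this
  exact trace_inv_aux u U hHerm.eigenvalues
    ((Matrix.mem_unitaryGroup_iff').mp hHerm.eigenvectorUnitary.2)
    ((Matrix.mem_unitaryGroup_iff).mp hHerm.eigenvectorUnitary.2)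
    hlam hspec
end

section
/- Let n ≥ 1 and let B be an invertible n×n real matrix with rows b_1, …, b_n, regarded as a basis of the lattice L with volume Vol L = |det B|. Then ∏_{i=1}^n ‖b_i‖ ≤ (S(B)/n)^{n/2} · Vol L. -/
open Finset Matrix

/-- **Hadamard's inequality** for the rows of a real square matrix. -/
lemma hadamard_rows {n : ℕ} (M : Matrix (Fin n) (Fin n) ℝ) :
    |M.det| ≤ ∏ i, Real.sqrt (∑ j, M i j ^ 2) := by
  classical
  have h : Module.finrank ℝ (EuclideanSpace ℝ (Fin n)) = Fintype.card (Fin n) := by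
    simp
  set f : Fin n → EuclideanSpace ℝ (Fin n) := fun i => (WithLp.equiv 2 _).symm (M i) with hf
  haveI : WellFoundedLT (Fin n) := inferInstance
  set b : OrthonormalBasis (Fin n) ℝ (EuclideanSpace ℝ (Fin n)) :=
    InnerProductSpace.gramSchmidtOrthonormalBasis h f with hb
  have hdet : b.toBasis.det f = ∏ i, (inner ℝ (b i) (f i) : ℝ) :=
    InnerProductSpace.gramSchmidtOrthonormalBasis_det h f
  set e := EuclideanSpace.basisFun (Fin n) ℝ with he
  -- the determinant of `f` in the standard basis is `det Mᵀ = det M`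
  have hEM : e.toBasis.toMatrix f = Mᵀ := by
    ext i j
    simp [Module.Basis.toMatrix_apply, he, hf, Matrix.transpose_apply]
  have hfac : b.toBasis.toMatrix f = b.toBasis.toMatrix e.toBasis * Mᵀ := by
    rw [← hEM, Module.Basis.toMatrix_mul_toMatrix]
  have habs : |b.toBasis.det f| = |M.det| := by
    rw [Module.Basis.det_apply, hfac, Matrix.det_mul, abs_mul, Matrix.det_transpose]
    have h1 : ‖b.toBasis.det e.toBasis‖ = 1 := b.det_to_matrix_orthonormalBasis e
    rw [Module.Basis.det_apply, Real.norm_eq_abs] at h1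
    rw [h1, one_mul]
  have hnorm : ∀ i, ‖f i‖ = Real.sqrt (∑ j, M i j ^ 2) := by
    intro i
    rw [EuclideanSpace.norm_eq]
    congr 1
    refine Finset.sum_congr rfl fun j _ => ?_
    simp [hf, Real.norm_eq_abs, sq_abs]
  calc |M.det| = |∏ i, (inner ℝ (b i) (f i) : ℝ)| := by rw [← habs, hdet]
    _ = ∏ i, |(inner ℝ (b i) (f i) : ℝ)| := by rw [Finset.abs_prod]
    _ ≤ ∏ i, Real.sqrt (∑ j, M i j ^ 2) := by
        refine Finset.prod_le_prod (fun i _ => abs_nonneg _) fun i _ => ?_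
        have := abs_real_inner_le_norm (b i) (f i)
        rwa [b.orthonormal.1 i, one_mul, hnorm i] at this

/-- For an invertible `B` (rows `b_i` a basis of a lattice of volume `|det B|`),
`∏ i, ‖b_i‖ ≤ (S(B)/n)^(n/2) · |det B|`. -/
theorem stmt_10 (n : ℕ) (hn : 1 ≤ n) (B : Matrix (Fin n) (Fin n) ℝ)
    (hB : IsUnit B.det) :
    ∏ i, Real.sqrt (∑ j, (B i j) ^ 2) ≤
      (seysen B / n) ^ ((n : ℝ) / 2) * |B.det| := by
  classical
  have hn0 : (0:ℝ) < n := by exact_mod_cast Nat.pos_of_ne_zero (by omega)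
  set a : Fin n → ℝ := fun i => ∑ j, (B i j) ^ 2 with ha
  set c : Fin n → ℝ := fun i => ∑ j, (B⁻¹ j i) ^ 2 with hc
  have han : ∀ i, 0 ≤ a i := fun i => Finset.sum_nonneg fun j _ => sq_nonneg _
  have hcn : ∀ i, 0 ≤ c i := fun i => Finset.sum_nonneg fun j _ => sq_nonneg _
  have hsey : seysen B = ∑ i, a i * c i := rfl
  have hseyn : 0 ≤ seysen B / n := by
    rw [hsey]
    positivity
  -- each `a i * c i ≥ 1` by Cauchy-Schwarz
  have hmul : ∀ i, (1:ℝ) ≤ a i * c i := by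
    intro i
    have hBB : (B * B⁻¹) i i = 1 := by
      rw [Matrix.mul_nonsing_inv B hB]; simp
    have hsum1 : (∑ j, B i j * B⁻¹ j i) = 1 := by
      simpa [Matrix.mul_apply] using hBB
    calc (1:ℝ) = (∑ j, B i j * B⁻¹ j i) ^ 2 := by rw [hsum1]; norm_num
      _ ≤ a i * c i :=
        Finset.sum_mul_sq_le_sq_mul_sq _ (fun j => B i j) (fun j => B⁻¹ j i)
  -- AM-GM
  have hw : ∑ _i : Fin n, (1 / (n:ℝ)) = 1 := by
    rw [Finset.sum_const, Finset.card_univ, Fintype.card_fin, nsmul_eq_mul]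
    field_simp
  have hgm : ∏ i, (a i * c i) ^ (1 / (n:ℝ)) ≤ seysen B / n := by
    have h1 := Real.geom_mean_le_arith_mean_weighted Finset.univ (fun _ => (1 / (n:ℝ)))
      (fun i => a i * c i) (fun i _ => by positivity) hw
      (fun i _ => mul_nonneg (han i) (hcn i))
    calc ∏ i, (a i * c i) ^ (1 / (n:ℝ)) ≤ ∑ i, (1 / (n:ℝ)) * (a i * c i) := h1
      _ = seysen B / n := by rw [← Finset.mul_sum, ← hsey, one_div, inv_mul_eq_div]
  have key : ∏ i, Real.sqrt (a i * c i) ≤ (seysen B / n) ^ ((n:ℝ) / 2) := by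
    have h2 : ∏ i, Real.sqrt (a i * c i)
        = (∏ i, (a i * c i) ^ (1 / (n:ℝ))) ^ ((n:ℝ) / 2) := by
      rw [← Real.finset_prod_rpow _ _
        (fun i _ => Real.rpow_nonneg (mul_nonneg (han i) (hcn i)) _) _]
      refine Finset.prod_congr rfl fun i _ => ?_
      rw [Real.sqrt_eq_rpow, ← Real.rpow_mul (mul_nonneg (han i) (hcn i))]
      congr 1
      field_simp
    rw [h2]
    exact Real.rpow_le_rpow
      (Finset.prod_nonneg fun i _ =>
        Real.rpow_nonneg (mul_nonneg (han i) (hcn i)) _)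
      hgm (by positivity)
  -- Hadamard for the dual basis
  have hH : |B.det|⁻¹ ≤ ∏ i, Real.sqrt (c i) := by
    have h3 := hadamard_rows (B⁻¹)ᵀ
    rw [Matrix.det_transpose, Matrix.det_nonsing_inv, Ring.inverse_eq_inv', abs_inv] at h3
    simpa [Matrix.transpose_apply, hc] using h3
  have hd : 0 < |B.det| := abs_pos.mpr hB.ne_zero
  have chain : (∏ i, Real.sqrt (a i)) / |B.det| ≤ (seysen B / n) ^ ((n:ℝ) / 2) := by
    rw [div_eq_mul_inv]
    calc (∏ i, Real.sqrt (a i)) * |B.det|⁻¹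
        ≤ (∏ i, Real.sqrt (a i)) * ∏ i, Real.sqrt (c i) :=
          mul_le_mul_of_nonneg_left hH
            (Finset.prod_nonneg fun i _ => Real.sqrt_nonneg _)
      _ = ∏ i, Real.sqrt (a i * c i) := by
          rw [← Finset.prod_mul_distrib]
          exact Finset.prod_congr rfl fun i _ => (Real.sqrt_mul (han i) _).symm
      _ ≤ (seysen B / n) ^ ((n:ℝ) / 2) := key
  calc ∏ i, Real.sqrt (a i) = (∏ i, Real.sqrt (a i)) / |B.det| * |B.det| := by
        rw [div_mul_cancel₀ _ hd.ne']
    _ ≤ (seysen B / n) ^ ((n:ℝ) / 2) * |B.det| :=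
        mul_le_mul_of_nonneg_right chain hd.le
end

section
/- Let n ≥ 2 and let x_1, …, x_n be positive real numbers. Let a = (1/n)·Σ_{i=1}^n x_i be their arithmetic mean, g = (∏_{i=1}^n x_i)^{1/n} their geometric mean, and h = n/(Σ_{i=1}^n 1/x_i) their harmonic mean, and set α = 1/n. Then g ≤ ((a − h(1−2α) − √((a−h)(a−h(1−2α)²)))/(2α))^α · ((a + h(1−2α) + √((a−h)(a−h(1−2α)²)))/(2(1−α)))^{1−α}. -/
lemma exp_ineq1 (v : ℝ) (hv : 0 ≤ v) : 2*(Real.exp v - 1) ≤ v*(Real.exp v + 1) := by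
  have hmono : Monotone (fun w => w*(Real.exp w + 1) - 2*(Real.exp w - 1)) := by
    apply monotone_of_deriv_nonneg
    · fun_prop
    · intro t
      have hder : HasDerivAt (fun w => w*(Real.exp w + 1) - 2*(Real.exp w - 1))
          (1*(Real.exp t + 1) + t*Real.exp t - 2*Real.exp t) t :=
        (((hasDerivAt_id t).mul ((Real.hasDerivAt_exp t).add_const 1)).sub
          (((Real.hasDerivAt_exp t).sub_const 1).const_mul 2))
      rw [hder.deriv]
      have h1 := Real.add_one_le_exp (-t)
      have h2 : Real.exp t * Real.exp (-t) = 1 := by rw [← Real.exp_add]; simp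
      nlinarith [Real.exp_pos t, Real.exp_pos (-t)]
  have := hmono hv
  simp only [Real.exp_zero] at this
  nlinarith [this]

lemma exp_ineq2 (v : ℝ) (hv : 0 ≤ v) : 2*v ≤ Real.exp v - Real.exp (-v) := by
  have hmono : Monotone (fun w => Real.exp w - Real.exp (-w) - 2*w) := by
    apply monotone_of_deriv_nonneg
    · fun_prop
    · intro t
      have h1 : HasDerivAt (fun w : ℝ => Real.exp (-w)) (Real.exp (-t) * (-1)) t := by
        have := (Real.hasDerivAt_exp (-t)).comp t ((hasDerivAt_id t).neg)
        exact this
      have h2 : HasDerivAt (fun w : ℝ => 2*w) 2 t := by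
        simpa using (hasDerivAt_id t).const_mul 2
      have hder : HasDerivAt (fun w => Real.exp w - Real.exp (-w) - 2*w) (Real.exp t - Real.exp (-t) * -1 - 2) t := ((Real.hasDerivAt_exp t).sub h1).sub h2
      rw [hder.deriv]
      have h3 : Real.exp t * Real.exp (-t) = 1 := by rw [← Real.exp_add]; simp
      nlinarith [Real.exp_pos t, Real.exp_pos (-t), sq_nonneg (Real.exp t - 1)]
  have := hmono hv
  simp only [neg_zero, Real.exp_zero] at this
  nlinarith [this]

lemma log_le_two_mul (p : ℝ) (hp0 : 0 < p) (hp1 : p ≤ 1) :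
    Real.log p ≤ 2*(p-1)/(p+1) := by
  have hv : 0 ≤ -Real.log p := by
    have := Real.log_nonpos hp0.le hp1; linarith
  have h := exp_ineq1 _ hv
  rw [Real.exp_neg, Real.exp_log hp0] at h
  rw [le_div_iff₀ (by linarith : (0:ℝ) < p + 1)]
  have h2 : p⁻¹ * p = 1 := inv_mul_cancel₀ (ne_of_gt hp0)
  nlinarith [h, hp0]

lemma two_mul_log_ge (p : ℝ) (hp0 : 0 < p) (hp1 : p ≤ 1) :
    (p^2 - 1)/(2*p) ≤ Real.log p := by
  have hv : 0 ≤ -Real.log p := by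
    have := Real.log_nonpos hp0.le hp1; linarith
  have h := exp_ineq2 _ hv
  rw [Real.exp_neg, Real.exp_log hp0, neg_neg, Real.exp_log hp0] at h
  rw [div_le_iff₀ (by positivity)]
  have h2 : p⁻¹ * p = 1 := inv_mul_cancel₀ (ne_of_gt hp0)
  nlinarith [h, hp0]

/-- Tangent line trick lemma. -/
lemma tangent_line (p : ℝ) (hp0 : 0 < p) (hp1 : p ≤ 1) :
    ∃ A B : ℝ, A*(p-1) + B*(p⁻¹ - 1) = Real.log p ∧
      ∀ y : ℝ, p ≤ y → Real.log y ≤ A*(y-1) + B*(y⁻¹ - 1) := by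
  rcases eq_or_lt_of_le hp1 with h1 | h1
  · refine ⟨1, 0, by simp [h1], fun y hy => ?_⟩
    have hy0 : 0 < y := by linarith
    have := Real.log_le_sub_one_of_pos hy0
    simpa using this
  -- p < 1
  set L := Real.log p with hL
  set B := p*(L - p + 1)/(1-p)^2 with hB
  set A := 1 + B with hA
  have hsq : (0:ℝ) < (1-p)^2 := by nlinarith
  have hpne : p ≠ 0 := ne_of_gt hp0
  -- A > 0
  have hlogl : 1 - p⁻¹ < L := by
    have h2 : Real.log p⁻¹ < p⁻¹ - 1 :=
      Real.log_lt_sub_one_of_pos (by positivity) (by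
        intro hcon
        have : p = 1 := by field_simp at hcon; linarith
        linarith)
    rw [Real.log_inv] at h2
    linarith
  have hpL : p - 1 < p * L := by
    have h4 := mul_lt_mul_of_pos_left hlogl hp0
    have h3 : p * (1 - p⁻¹) = p - 1 := by field_simp
    linarith [h3 ▸ h4]
  have hApos : 0 < A := by
    have key : -(1-p)^2 < p*(L-p+1) := by nlinarith
    have h5 : -1 < p*(L-p+1)/(1-p)^2 := by rw [lt_div_iff₀ hsq]; linarith
    rw [hA]; linarith [h5]
  have hAne : A ≠ 0 := ne_of_gt hApos
  -- B < 0
  have hLlt : L < p - 1 := Real.log_lt_sub_one_of_pos hp0 (by linarith)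
  have hBneg : B < 0 := by
    rw [hB]
    apply div_neg_of_neg_of_pos ?_ hsq
    nlinarith
  set S := -B/A with hS
  have hSpos : 0 < S := by rw [hS]; exact div_pos (by linarith) hApos
  have hAS : A * S = -B := by rw [hS]; field_simp
  -- S ≤ 1
  have hS1 : S ≤ 1 := by
    have h2 := two_mul_log_ge p hp0 hp1
    have hB2 : -(1:ℝ)/2 ≤ B := by
      rw [hB, le_div_iff₀ hsq]
      rw [div_le_iff₀ (by positivity)] at h2
      nlinarith
    rw [hS, div_le_one hApos, hA]; linarith
  -- p ≤ S
  have hpS : p ≤ S := by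
    have h2 := log_le_two_mul p hp0 hp1
    have hBle : B*(1+p) ≤ -p := by
      have h6 : B ≤ -p/(1+p) := by
        rw [hB, div_le_div_iff₀ hsq (by linarith)]
        rw [le_div_iff₀ (by linarith : (0:ℝ) < p + 1)] at h2
        nlinarith
      rw [← le_div_iff₀ (by linarith : (0:ℝ) < 1 + p)]
      linarith [h6]
    rw [hS, le_div_iff₀ hApos]
    have : p * A = p + p*B := by rw [hA]; ring
    nlinarith [hBle, hp0, hBneg]
  have hABval : A = 1 + B := hA
  have hFp' : A*(p-1) + B*(p⁻¹ - 1) = L := by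
    rw [hA, hB]; field_simp; ring
  clear_value L B A S
  clear hB hA hS hsq hpL hlogl
  -- the function F
  set F := fun y : ℝ => A*(y-1) + B*(y⁻¹ - 1) - Real.log y with hF
  have hFp : F p = 0 := by rw [hF]; simp only; linarith [hFp']
  have hF1 : F 1 = 0 := by rw [hF]; simp
  -- derivative
  have hderiv : ∀ y : ℝ, 0 < y → HasDerivAt F (A*(y-1)*(y-S)/y^2) y := by
    intro y hy
    have hyne : y ≠ 0 := ne_of_gt hy
    have h1 : HasDerivAt (fun w : ℝ => A*(w-1)) (A*1) y :=
      ((hasDerivAt_id y).sub_const 1).const_mul A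
    have h2 : HasDerivAt (fun w : ℝ => B*(w⁻¹-1)) (B*(-(y^2)⁻¹)) y :=
      ((hasDerivAt_inv hyne).sub_const 1).const_mul B
    have h3 : HasDerivAt Real.log y⁻¹ y := Real.hasDerivAt_log hyne
    have h4 := (h1.add h2).sub h3
    have e2 : A*(y-1)*(y-S) = A*y^2 - y - B := by
      have : A*S = -B := hAS
      rw [hABval] at this ⊢
      nlinarith [this]
    have e : A*1 + B*(-(y^2)⁻¹) - y⁻¹ = A*(y-1)*(y-S)/y^2 := by
      rw [e2]; field_simp; ring
    rw [e] at h4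
    exact h4
  have hcont : ∀ s : Set ℝ, s ⊆ Set.Ioi (0:ℝ) → ContinuousOn F s := fun s hs y hy =>
    ((hderiv y (hs hy)).continuousAt).continuousWithinAt
  have hdiff : ∀ s : Set ℝ, s ⊆ Set.Ioi (0:ℝ) → DifferentiableOn ℝ F s := fun s hs y hy =>
    ((hderiv y (hs hy)).differentiableAt).differentiableWithinAt
  -- piece 1 : MonotoneOn [p, S]
  have hmono1 : MonotoneOn F (Set.Icc p S) := by
    apply monotoneOn_of_deriv_nonneg (convex_Icc _ _)
    · exact hcont _ (fun y hy => Set.mem_Ioi.2 (lt_of_lt_of_le hp0 hy.1))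
    · refine hdiff _ ?_
      intro y hy
      rw [interior_Icc] at hy
      exact Set.mem_Ioi.2 (lt_trans hp0 hy.1)
    · intro y hy
      rw [interior_Icc] at hy
      have hy0 : 0 < y := lt_trans hp0 hy.1
      rw [(hderiv y hy0).deriv]
      apply div_nonneg ?_ (by positivity)
      have hu1 : y - 1 ≤ 0 := by linarith [hy.2, hS1]
      have hu2 : y - S ≤ 0 := by linarith [hy.2]
      have h3 : 0 ≤ (y-1)*(y-S) := by nlinarith
      rw [mul_assoc]; exact mul_nonneg hApos.le h3
  -- piece 2 : AntitoneOn [S, 1]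
  have hmono2 : AntitoneOn F (Set.Icc S 1) := by
    apply antitoneOn_of_deriv_nonpos (convex_Icc _ _)
    · exact hcont _ (fun y hy => Set.mem_Ioi.2 (lt_of_lt_of_le hSpos hy.1))
    · refine hdiff _ ?_
      intro y hy
      rw [interior_Icc] at hy
      exact Set.mem_Ioi.2 (lt_trans hSpos hy.1)
    · intro y hy
      rw [interior_Icc] at hy
      have hy0 : 0 < y := lt_trans hSpos hy.1
      rw [(hderiv y hy0).deriv]
      apply div_nonpos_of_nonpos_of_nonneg ?_ (by positivity)
      have hu1 : y - 1 ≤ 0 := by linarith [hy.2]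
      have hu2 : 0 ≤ y - S := by linarith [hy.1]
      have h3 : (y-1)*(y-S) ≤ 0 := by nlinarith
      rw [mul_assoc]
      exact mul_nonpos_iff.2 (Or.inl ⟨hApos.le, h3⟩)
  -- piece 3 : MonotoneOn [1, ∞)
  have hmono3 : MonotoneOn F (Set.Ici 1) := by
    apply monotoneOn_of_deriv_nonneg (convex_Ici _)
    · exact hcont _ (fun y hy => Set.mem_Ioi.2 (lt_of_lt_of_le one_pos hy))
    · refine hdiff _ ?_
      intro y hy
      rw [interior_Ici] at hy
      exact Set.mem_Ioi.2 (lt_trans one_pos hy)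
    · intro y hy
      rw [interior_Ici] at hy
      have hy0 : 0 < y := lt_trans one_pos hy
      rw [(hderiv y hy0).deriv]
      apply div_nonneg ?_ (by positivity)
      have h1 : 0 ≤ y - 1 := by rw [Set.mem_Ioi] at hy; linarith
      have h2 : 0 ≤ y - S := by rw [Set.mem_Ioi] at hy; linarith [hS1]
      positivity
  refine ⟨A, B, hFp', fun y hy => ?_⟩
  have hFy : 0 ≤ F y := by
    rcases le_total y S with hyS | hyS
    · have := hmono1 (Set.mem_Icc.2 ⟨le_refl p, hpS⟩) (Set.mem_Icc.2 ⟨hy, hyS⟩) hy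
      rw [hFp] at this; exact this
    · rcases le_total y 1 with hy1 | hy1
      · have := hmono2 (Set.mem_Icc.2 ⟨hyS, hy1⟩) (Set.mem_Icc.2 ⟨hS1, le_refl 1⟩) hy1
        rw [hF1] at this; exact this
      · have := hmono3 (Set.mem_Ici.2 (le_refl (1:ℝ))) (Set.mem_Ici.2 hy1) hy1
        rw [hF1] at this; exact this
  simp only [hF] at hFy
  linarith

set_option maxHeartbeats 1600000 in
/-- A sharpened harmonic–geometric–arithmetic mean inequality: for positive
reals `x_1, …, x_n` (`n ≥ 2`) with arithmetic mean `a`, geometric mean `g`,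
harmonic mean `h`, and `α = 1/n`, one has
`g ≤ ((a − h(1−2α) − √((a−h)(a−h(1−2α)²)))/(2α))^α ·
     ((a + h(1−2α) + √((a−h)(a−h(1−2α)²)))/(2(1−α)))^(1−α)`. -/
theorem stmt_11 (n : ℕ) (hn : 2 ≤ n) (x : Fin n → ℝ) (hx : ∀ i, 0 < x i)
    (a g h α : ℝ)
    (ha : a = (∑ i, x i) / n)
    (hg : g = (∏ i, x i) ^ ((1 : ℝ) / n))
    (hh : h = n / (∑ i, 1 / x i))
    (hα : α = 1 / n) :
    g ≤ ((a - h * (1 - 2 * α) -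
            Real.sqrt ((a - h) * (a - h * (1 - 2 * α) ^ 2))) / (2 * α)) ^ α *
        ((a + h * (1 - 2 * α) +
            Real.sqrt ((a - h) * (a - h * (1 - 2 * α) ^ 2))) / (2 * (1 - α)))
          ^ (1 - α) := by
  have hn2 : (2:ℝ) ≤ (n:ℝ) := by exact_mod_cast hn
  have hn0 : (0:ℝ) < n := by linarith
  have hnne : (n:ℝ) ≠ 0 := ne_of_gt hn0
  haveI : NeZero n := ⟨by omega⟩
  obtain ⟨s, hs⟩ : ∃ s', (∑ i, x i) = s' := ⟨_, rfl⟩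
  obtain ⟨r, hr⟩ : ∃ r', (∑ i, 1 / x i) = r' := ⟨_, rfl⟩
  rw [hs] at ha
  rw [hr] at hh
  have hspos : 0 < s := hs ▸ Finset.sum_pos (fun i _ => hx i) Finset.univ_nonempty
  have hrpos : 0 < r := hr ▸ Finset.sum_pos (fun i _ => one_div_pos.mpr (hx i)) Finset.univ_nonempty
  -- Cauchy-Schwarz on the full set
  have hCSfull : ((n:ℝ))^2 ≤ s * r := by
    have h5 := Finset.sum_sq_le_sum_mul_sum_of_sq_eq_mul Finset.univ
      (r := fun _ : Fin n => (1:ℝ)) (f := fun i => x i) (g := fun i => 1 / x i)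
      (fun i _ => (hx i).le) (fun i _ => (one_div_pos.mpr (hx i)).le)
      (fun i _ => by rw [one_pow, mul_one_div, div_self (ne_of_gt (hx i))])
    rw [hs, hr] at h5
    simpa using h5
  have hapos : 0 < a := ha ▸ div_pos hspos hn0
  have hhpos : 0 < h := hh ▸ div_pos hn0 hrpos
  have hhne : h ≠ 0 := ne_of_gt hhpos
  have has : s = n * a := by rw [ha]; field_simp
  have hrh : h * r = n := by rw [hh]; field_simp
  have hha : h ≤ a := by
    rw [ha, hh, div_le_div_iff₀ hrpos hn0]
    nlinarith
  subst hα
  -- opaque D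
  obtain ⟨D, hD⟩ : ∃ D', Real.sqrt ((a - h) * (a - h * (1 - 2 * (1/(n:ℝ))) ^ 2)) = D' := ⟨_, rfl⟩
  rw [hD]
  have hα2 : 2 * (1/(n:ℝ)) ≤ 1 := by
    rw [mul_one_div, div_le_one hn0]; linarith
  have hα0 : 0 < 1/(n:ℝ) := by positivity
  have hΔ0 : 0 ≤ (a - h) * (a - h * (1 - 2 * (1/(n:ℝ))) ^ 2) := by
    apply mul_nonneg (by linarith)
    have ht0 : 0 ≤ 1 - 2*(1/(n:ℝ)) := by linarith
    have hsq1 : (1-2*(1/(n:ℝ)))^2 ≤ 1 := by nlinarith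
    have := mul_le_of_le_one_right hhpos.le hsq1
    linarith
  have hD0 : 0 ≤ D := hD ▸ Real.sqrt_nonneg _
  have hD2 : D^2 = (a - h) * (a - h * (1 - 2 * (1/(n:ℝ))) ^ 2) := by
    rw [← hD]; exact Real.sq_sqrt hΔ0
  obtain ⟨B, hB⟩ : ∃ B', (n:ℝ)*a - ((n:ℝ)-2)*h = B' := ⟨_, rfl⟩
  have hBpos : 0 < B := by rw [← hB]; nlinarith
  have hnD : ((n:ℝ)*D)^2 = B^2 - 4*a*h := by
    rw [mul_pow, hD2, ← hB]
    field_simp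
    ring
  obtain ⟨P, hP⟩ : ∃ P', (a - h * (1 - 2 * (1/(n:ℝ))) - D) / (2 * (1/(n:ℝ))) = P' := ⟨_, rfl⟩
  obtain ⟨Q, hQ⟩ : ∃ Q', (a + h * (1 - 2 * (1/(n:ℝ))) + D) / (2 * (1 - 1/(n:ℝ))) = Q' := ⟨_, rfl⟩
  rw [hP, hQ]
  have hn1 : (0:ℝ) < (n:ℝ) - 1 := by linarith
  have hP2 : 2 * P = B - n*D := by
    rw [← hP, ← hB]; field_simp
  have hQ2 : 2 * (((n:ℝ)) - 1) * Q = (n:ℝ)*a + ((n:ℝ)-2)*h + (n:ℝ)*D := by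
    rw [← hQ]; field_simp
  have hnD0 : 0 ≤ (n:ℝ)*D := mul_nonneg hn0.le hD0
  have hPpos : 0 < P := by
    have hlt : (n:ℝ)*D < B := by nlinarith [mul_pos hapos hhpos]
    linarith
  have hQpos : 0 < Q := by nlinarith [mul_nonneg (by linarith : (0:ℝ) ≤ (n:ℝ)-2) hhpos.le, mul_pos hn0 hapos]
  have hPQs : P + ((n:ℝ) - 1) * Q = s := by rw [has]; nlinarith [hP2, hQ2]
  have hnD' : (n:ℝ)*D = B - 2*P := by linarith
  have hPquad : P^2 - B*P + a*h = 0 := by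
    have h4 : (B - 2*P)^2 = B^2 - 4*a*h := by rw [← hnD']; exact hnD
    linear_combination h4 / 4
  have hKey : ((n:ℝ)-2)*(a-h) ≤ (n:ℝ)*D := by
    nlinarith [hnD, hnD0, mul_nonneg (mul_nonneg hn1.le hapos.le) (sub_nonneg.2 hha), hn2, hB]
  have hPa : P ≤ a := by nlinarith [hKey, hP2, hB]
  have haQ : a ≤ Q := by nlinarith [hKey, hQ2, hn1]
  have hPQ : P ≤ Q := le_trans hPa haQ
  -- each x i ≥ P
  have hxP : ∀ i, P ≤ x i := by
    intro i
    have hxi := hx i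
    have hxine : x i ≠ 0 := ne_of_gt hxi
    have hmem : i ∈ Finset.univ := Finset.mem_univ i
    have hcs : (((n:ℝ) - 1))^2 ≤ (s - x i) * (r - 1/x i) := by
      have h5 := Finset.sum_sq_le_sum_mul_sum_of_sq_eq_mul (Finset.univ.erase i)
        (r := fun _ : Fin n => (1:ℝ)) (f := fun j => x j) (g := fun j => 1 / x j)
        (fun j _ => (hx j).le) (fun j _ => (one_div_pos.mpr (hx j)).le)
        (fun j _ => by rw [one_pow, mul_one_div, div_self (ne_of_gt (hx j))])
      have hc : (∑ _j ∈ Finset.univ.erase i, (1:ℝ)) = (n:ℝ) - 1 := by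
        rw [Finset.sum_const, Finset.card_erase_of_mem hmem]
        simp only [Finset.card_univ, Fintype.card_fin, nsmul_eq_mul, mul_one]
        have h1n : 1 ≤ n := by omega
        push_cast [Nat.cast_sub h1n]
        ring
      have he1 : (∑ j ∈ Finset.univ.erase i, x j) = s - x i := by
        rw [Finset.sum_erase_eq_sub hmem, hs]
      have he2 : (∑ j ∈ Finset.univ.erase i, 1/x j) = r - 1/x i := by
        rw [Finset.sum_erase_eq_sub hmem, hr]
      rw [hc, he1, he2] at h5
      exact h5
    have hq : B*(x i) - (x i)^2 - a*h ≥ 0 := by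
      have h6 : ((n:ℝ)-1)^2 * (h * x i) ≤ (s - x i) * (r - 1/x i) * (h * x i) :=
        mul_le_mul_of_nonneg_right hcs (by positivity)
      have h7 : (s - x i) * (r - 1/x i) * (h * x i) = ((n:ℝ)*a - x i) * ((n:ℝ)*(x i) - h) := by
        have e1 : (r - 1/x i) * (h * x i) = (n:ℝ)*(x i) - h := by
          field_simp
          linear_combination (x i) * hrh
        calc (s - x i) * (r - 1/x i) * (h * x i)
            = (s - x i) * ((r - 1/x i) * (h * x i)) := by ring
          _ = ((n:ℝ)*a - x i) * ((n:ℝ)*(x i) - h) := by rw [e1, has]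
      rw [h7] at h6
      have h8 : ((n:ℝ)*a - x i) * ((n:ℝ)*(x i) - h) - ((n:ℝ)-1)^2 * (h * x i)
          = (n:ℝ) * (B*(x i) - (x i)^2 - a*h) := by rw [← hB]; ring
      by_contra hcon
      push_neg at hcon
      have h10 := mul_neg_of_pos_of_neg hn0 hcon
      linarith
    have hE : (n:ℝ)*D*(x i - P) - (x i - P)^2 = B*(x i) - (x i)^2 - a*h := by
      linear_combination (x i - P) * hnD' + hPquad
    by_contra hcon
    push_neg at hcon
    have t1 : 0 < P - x i := by linarith
    have t2 : (n:ℝ)*D*(x i - P) ≤ 0 := mul_nonpos_iff.2 (Or.inl ⟨hnD0, by linarith⟩)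
    have t3 : 0 < (P - x i)*(P - x i) := mul_pos t1 t1
    linarith
  -- tangent line data
  have hp0 : 0 < P/Q := div_pos hPpos hQpos
  have hp1 : P/Q ≤ 1 := by rw [div_le_one hQpos]; exact hPQ
  obtain ⟨A, Bc, heq, hineq⟩ := tangent_line (P/Q) hp0 hp1
  -- harmonic identity for P, Q
  have h5 : ((n:ℝ)-1)*Q = (n:ℝ)*a - P := by linarith [hPQs, has]
  have key : ((n:ℝ)-1)*(Q*h + ((n:ℝ)-1)*(P*h) - (n:ℝ)*(P*Q)) = 0 := by
    linear_combination (h - (n:ℝ)*P) * h5 + (n:ℝ)*hPquad - (n:ℝ)*P*hB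
  have hI2 : Q*h + ((n:ℝ)-1)*(P*h) = (n:ℝ)*(P*Q) := by
    rcases mul_eq_zero.1 key with h7 | h7
    · linarith
    · linarith
  have hQrP : r*(P*Q) = Q + ((n:ℝ)-1)*P := by
    have h8 : h*(r*(P*Q)) = h*(Q + ((n:ℝ)-1)*P) := by
      linear_combination -hI2 + P*Q*hrh
    exact mul_left_cancel₀ hhne h8
  -- summation
  have hxine : ∀ i, x i ≠ 0 := fun i => ne_of_gt (hx i)
  have hlogsum : ∑ i, Real.log (x i) ≤ Real.log P + ((n:ℝ)-1)*Real.log Q := by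
    have step : ∀ i, Real.log (x i) ≤ A*(x i/Q - 1) + Bc*((x i/Q)⁻¹ - 1) + Real.log Q := by
      intro i
      have h1 : P/Q ≤ x i/Q := by gcongr; exact hxP i
      have h2 := hineq _ h1
      have h3 : Real.log (x i / Q) = Real.log (x i) - Real.log Q :=
        Real.log_div (hxine i) (ne_of_gt hQpos)
      rw [h3] at h2
      linarith
    have hsum1 : ∑ i, Real.log (x i) ≤
        ∑ i, (A*(x i/Q - 1) + Bc*((x i/Q)⁻¹ - 1) + Real.log Q) :=
      Finset.sum_le_sum (fun i _ => step i)
    have e1 : ∑ i, (x i/Q - 1) = s/Q - n := by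
      rw [Finset.sum_sub_distrib, ← Finset.sum_div, hs]
      simp [Finset.card_univ]
    have e2 : ∑ i, ((x i/Q)⁻¹ - 1) = Q*r - n := by
      have e2a : ∀ i : Fin n, (x i/Q)⁻¹ - 1 = Q*(1/x i) - 1 := by
        intro i; rw [inv_div]; ring_nf
      rw [Finset.sum_congr rfl (fun i _ => e2a i), Finset.sum_sub_distrib, ← Finset.mul_sum, hr]
      simp [Finset.card_univ]
    have esum : ∑ i, (A*(x i/Q - 1) + Bc*((x i/Q)⁻¹ - 1) + Real.log Q)
        = A*(s/Q - n) + Bc*(Q*r - n) + (n:ℝ)*Real.log Q := by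
      rw [Finset.sum_add_distrib, Finset.sum_add_distrib, ← Finset.mul_sum, ← Finset.mul_sum,
        e1, e2, Finset.sum_const, Finset.card_univ, Fintype.card_fin, nsmul_eq_mul]
    have e3 : s/Q - n = P/Q - 1 := by
      rw [← hPQs]; field_simp; ring
    have e4 : Q*r - n = (P/Q)⁻¹ - 1 := by
      rw [inv_div]
      have hPne : P ≠ 0 := ne_of_gt hPpos
      field_simp
      linear_combination hQrP
    have e5 : Real.log (P/Q) = Real.log P - Real.log Q :=
      Real.log_div (ne_of_gt hPpos) (ne_of_gt hQpos)
    calc ∑ i, Real.log (x i)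
        ≤ A*(s/Q - n) + Bc*(Q*r - n) + (n:ℝ)*Real.log Q := by rw [← esum]; exact hsum1
      _ = A*(P/Q - 1) + Bc*((P/Q)⁻¹ - 1) + (n:ℝ)*Real.log Q := by rw [e3, e4]
      _ = Real.log (P/Q) + (n:ℝ)*Real.log Q := by rw [heq]
      _ = Real.log P + ((n:ℝ)-1)*Real.log Q := by rw [e5]; ring
  -- convert to the goal
  have hprodpos : 0 < ∏ i, x i := Finset.prod_pos (fun i _ => hx i)
  have hgpos : 0 < g := hg ▸ Real.rpow_pos_of_pos hprodpos _
  have hRpos : 0 < P ^ ((1:ℝ)/(n:ℝ)) * Q ^ (1 - (1:ℝ)/(n:ℝ)) :=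
    mul_pos (Real.rpow_pos_of_pos hPpos _) (Real.rpow_pos_of_pos hQpos _)
  have hloggoal : Real.log g ≤ Real.log (P ^ ((1:ℝ)/(n:ℝ)) * Q ^ (1 - (1:ℝ)/(n:ℝ))) := by
    rw [hg, Real.log_rpow hprodpos, Real.log_prod (fun i _ => hxine i),
      Real.log_mul (ne_of_gt (Real.rpow_pos_of_pos hPpos _)) (ne_of_gt (Real.rpow_pos_of_pos hQpos _)),
      Real.log_rpow hPpos, Real.log_rpow hQpos,
      show (1:ℝ) - 1/(n:ℝ) = (1/(n:ℝ))*((n:ℝ)-1) from by field_simp]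
    have h9 := mul_le_mul_of_nonneg_left hlogsum hα0.le
    linarith
  calc g = Real.exp (Real.log g) := (Real.exp_log hgpos).symm
    _ ≤ Real.exp (Real.log (P ^ ((1:ℝ)/(n:ℝ)) * Q ^ (1 - (1:ℝ)/(n:ℝ)))) := Real.exp_le_exp.2 hloggoal
    _ = P ^ ((1:ℝ)/(n:ℝ)) * Q ^ (1 - (1:ℝ)/(n:ℝ)) := Real.exp_log hRpos
end

section
/- Let n ≥ 2 and let λ_1, …, λ_n be positive real numbers with Σ_{i=1}^n λ_i = n. Set S = Σ_{i=1}^n 1/λ_i. Then ∏_{i=1}^n (1/λ_i) ≤ e · ((S + 1 − 2/n)/n)^{n−1}, and consequently ∏_{i=1}^n (1/λ_i) ≤ e · ((S + 1)/n)^{n−1}. -/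
lemma amgm_aux {ι : Type*} (s : Finset ι) (hs : s.Nonempty) (f : ι → ℝ)
    (hf : ∀ i ∈ s, 0 ≤ f i) :
    ∏ i ∈ s, f i ≤ ((∑ i ∈ s, f i) / s.card) ^ s.card := by
  have hc : (0:ℝ) < s.card := by exact_mod_cast Finset.card_pos.mpr hs
  have hw : ∑ _i ∈ s, (1 / (s.card:ℝ)) = 1 := by
    rw [Finset.sum_const, nsmul_eq_mul]
    field_simp
  have key := Real.geom_mean_le_arith_mean_weighted s (fun _ => 1 / (s.card:ℝ)) f
    (fun i _ => by positivity) hw hf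
  have h1 : ∏ i ∈ s, f i = (∏ i ∈ s, f i ^ (1 / (s.card:ℝ))) ^ s.card := by
    rw [← Finset.prod_pow]
    refine Finset.prod_congr rfl fun i hi => ?_
    rw [← Real.rpow_natCast (f i ^ (1 / (s.card:ℝ))), ← Real.rpow_mul (hf i hi)]
    rw [one_div, inv_mul_cancel₀ (ne_of_gt hc), Real.rpow_one]
  have h2 : ∑ i ∈ s, (1 / (s.card:ℝ)) * f i = (∑ i ∈ s, f i) / s.card := by
    rw [Finset.sum_div]
    exact Finset.sum_congr rfl fun i _ => by ring
  rw [h1]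
  calc (∏ i ∈ s, f i ^ (1 / (s.card:ℝ))) ^ s.card
      ≤ (∑ i ∈ s, (1 / (s.card:ℝ)) * f i) ^ s.card := by
        apply pow_le_pow_left₀ _ key
        exact Finset.prod_nonneg fun i hi => Real.rpow_nonneg (hf i hi) _
    _ = ((∑ i ∈ s, f i) / s.card) ^ s.card := by rw [h2]

/-- If `λ_1, …, λ_n > 0` (`n ≥ 2`) with `∑ λ_i = n`, and `S = ∑ 1/λ_i`, then
`∏ 1/λ_i ≤ e · ((S + 1 − 2/n)/n)^(n−1)`, and consequently
`∏ 1/λ_i ≤ e · ((S + 1)/n)^(n−1)`. -/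
theorem stmt_12 (n : ℕ) (hn : 2 ≤ n) (lam : Fin n → ℝ)
    (hpos : ∀ i, 0 < lam i) (hsum : ∑ i, lam i = n)
    (S : ℝ) (hS : S = ∑ i, 1 / lam i) :
    (∏ i, 1 / lam i) ≤ Real.exp 1 * ((S + 1 - 2 / n) / n) ^ (n - 1) ∧
    (∏ i, 1 / lam i) ≤ Real.exp 1 * ((S + 1) / n) ^ (n - 1) := by
  have hn0 : (0:ℝ) < n := by
    have : 0 < n := by omega
    exact_mod_cast this
  have hn2 : (2:ℝ) ≤ n := by exact_mod_cast hn
  set m := n - 1 with hm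
  have hmn : (m:ℝ) = (n:ℝ) - 1 := by
    have : (m:ℕ) + 1 = n := by omega
    have := congrArg (fun k : ℕ => (k:ℝ)) this
    push_cast at this
    linarith
  have hm0 : (0:ℝ) < m := by rw [hmn]; linarith
  -- choose j with lam j maximal
  have hne : (Finset.univ : Finset (Fin n)).Nonempty :=
    ⟨⟨0, by omega⟩, Finset.mem_univ _⟩
  obtain ⟨j, -, hj⟩ := Finset.exists_max_image Finset.univ lam hne
  have hlamj : 1 ≤ lam j := by
    by_contra h
    push_neg at h
    have hlt : ∑ i, lam i < ∑ _i : Fin n, (1:ℝ) :=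
      Finset.sum_lt_sum_of_nonempty hne
        (fun i _ => lt_of_le_of_lt (hj i (Finset.mem_univ i)) h)
    rw [hsum, Finset.sum_const, Finset.card_univ, Fintype.card_fin,
      nsmul_eq_mul, mul_one] at hlt
    exact lt_irrefl _ hlt
  set f : Fin n → ℝ := fun i => 1 / lam i with hfdef
  have hfpos : ∀ i, 0 < f i := fun i => by
    have := hpos i; positivity
  have hprod : ∏ i, f i = f j * ∏ i ∈ Finset.univ.erase j, f i :=
    (Finset.mul_prod_erase _ _ (Finset.mem_univ j)).symm
  have hsumS : ∑ i ∈ Finset.univ.erase j, f i = S - f j := by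
    have := Finset.add_sum_erase Finset.univ f (Finset.mem_univ j)
    rw [hS]
    linarith [this]
  have hcard : (Finset.univ.erase j).card = m := by
    rw [Finset.card_erase_of_mem (Finset.mem_univ j), Finset.card_univ,
      Fintype.card_fin]
  have hsne : (Finset.univ.erase j).Nonempty := by
    rw [← Finset.card_pos, hcard]; omega
  have hamgm := amgm_aux (Finset.univ.erase j) hsne f
    (fun i _ => (hfpos i).le)
  rw [hcard, hsumS] at hamgm
  -- hamgm : ∏ i ∈ erase, f i ≤ ((S - f j)/m)^m
  have hT0 : 0 ≤ S - f j := by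
    rw [← hsumS]
    exact Finset.sum_nonneg fun i _ => (hfpos i).le
  have hfj1 : f j ≤ 1 := by
    rw [hfdef]
    simp only
    rw [div_le_one (hpos j)]
    exact hlamj
  set B := S + 1 - 2 / (n:ℝ) with hB
  have h2n : 2 / (n:ℝ) ≤ 1 := by
    rw [div_le_one hn0]; exact hn2
  have hTB : S - f j ≤ B := by
    have := (hfpos j).le
    rw [hB]; linarith
  have hB0 : 0 ≤ B := le_trans hT0 hTB
  have hBn0 : 0 ≤ B / n := div_nonneg hB0 hn0.le
  -- (n/m)^m ≤ exp 1
  have hexp : ((n:ℝ) / m) ^ m ≤ Real.exp 1 := by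
    have h1 : (n:ℝ) / m = 1 / (m:ℝ) + 1 := by
      have hm1 : (m:ℝ) ≠ 0 := ne_of_gt hm0
      field_simp
      rw [hmn]; ring
    have h2 : (1 / (m:ℝ) + 1) ≤ Real.exp (1 / m) := Real.add_one_le_exp _
    have h3 : ((n:ℝ) / m) ^ m ≤ Real.exp (1 / m) ^ m := by
      apply pow_le_pow_left₀ _ (h1 ▸ h2)
      positivity
    have h4 : Real.exp (1 / (m:ℝ)) ^ m = Real.exp 1 := by
      rw [← Real.exp_nat_mul]
      congr 1
      field_simp
    rwa [h4] at h3
  have key : ((S - f j) / m) ^ m ≤ Real.exp 1 * (B / n) ^ m := by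
    calc ((S - f j) / m) ^ m
        ≤ (B / m) ^ m := by
          apply pow_le_pow_left₀ (div_nonneg hT0 hm0.le)
          gcongr
      _ = ((n:ℝ) / m) ^ m * (B / n) ^ m := by
          rw [← mul_pow]
          congr 1
          field_simp
      _ ≤ Real.exp 1 * (B / n) ^ m := by
          apply mul_le_mul_of_nonneg_right hexp
          positivity
  have main1 : (∏ i, f i) ≤ Real.exp 1 * (B / n) ^ m := by
    rw [hprod]
    calc f j * ∏ i ∈ Finset.univ.erase j, f i
        ≤ 1 * (((S - f j) / m) ^ m) := by
          apply mul_le_mul hfj1 hamgm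
            (Finset.prod_nonneg fun i _ => (hfpos i).le) zero_le_one
      _ = ((S - f j) / m) ^ m := one_mul _
      _ ≤ Real.exp 1 * (B / n) ^ m := key
  constructor
  · exact main1
  · refine le_trans main1 ?_
    apply mul_le_mul_of_nonneg_left _ (Real.exp_pos 1).le
    apply pow_le_pow_left₀ hBn0
    have h2n' : (0:ℝ) ≤ 2 / n := by positivity
    gcongr
    rw [hB]; linarith
end

section
/- Let n ≥ 2 and let B be an invertible n×n real matrix with rows b_1, …, b_n, regarded as a basis of the lattice L with volume Vol L = |det B|. Then ∏_{i=1}^n ‖b_i‖ ≤ e^{1/2} · ((S(B) + 1)/n)^{(n−1)/2} · Vol L. -/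
open Finset in
private lemma amgm_step (n : ℕ) (hn : 2 ≤ n) [NeZero n] (ρ : Fin n → ℝ) (S : ℝ)
    (hρ1 : ∀ i, 1 ≤ ρ i) (hρ0 : ρ 0 = 1)
    (hsum : ∑ i ∈ Finset.univ.erase (0 : Fin n), ρ i ^ 2 ≤ S) (hS : 0 ≤ S) :
    ∏ i, ρ i ≤ Real.exp (1 / 2) * ((S + 1) / n) ^ (((n : ℝ) - 1) / 2) := by
  set s := Finset.univ.erase (0 : Fin n) with hs
  have hρ0' : ∀ i, 0 ≤ ρ i := fun i => le_trans zero_le_one (hρ1 i)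
  set m : ℝ := (n : ℝ) - 1 with hm
  have hn2 : (2 : ℝ) ≤ (n : ℝ) := by exact_mod_cast hn
  have hm1 : (1 : ℝ) ≤ m := by rw [hm]; linarith
  have hm0 : m ≠ 0 := by linarith
  have hmpos : (0 : ℝ) < m := by linarith
  have hnpos : (0 : ℝ) < (n : ℝ) := by linarith
  have hnm : (n : ℝ) = m + 1 := by rw [hm]; ring
  have hcard : (s.card : ℝ) = m := by
    rw [hs, Finset.card_erase_of_mem (Finset.mem_univ _), Finset.card_univ,
      Fintype.card_fin]
    have h1 : 1 ≤ n := by omega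
    push_cast [h1]
    rw [hm]
  have hw : ∑ _i ∈ s, (1 / m) = 1 := by
    rw [Finset.sum_const, nsmul_eq_mul, hcard]
    field_simp
  have amgm := Real.geom_mean_le_arith_mean_weighted s (fun _ => 1 / m)
      (fun i => ρ i ^ 2) (fun i _ => by positivity) hw (fun i _ => by positivity)
  set T : ℝ := ∑ i ∈ s, 1 / m * ρ i ^ 2 with hT
  have hT0 : 0 ≤ T := Finset.sum_nonneg fun i _ => by positivity
  set P : ℝ := ∏ i ∈ s, ρ i ^ 2 with hP
  have hP0 : 0 ≤ P := Finset.prod_nonneg fun i _ => by positivity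
  have h1 : P ^ (1 / m) ≤ T := by
    rw [hP, ← Real.finset_prod_rpow s _ (fun i _ => by positivity)]
    exact amgm
  have h2 : P ≤ T ^ m := by
    have h := Real.rpow_le_rpow (Real.rpow_nonneg hP0 _) h1 hmpos.le
    rwa [← Real.rpow_mul hP0, one_div, inv_mul_cancel₀ hm0, Real.rpow_one] at h
  have hTle : T ≤ Real.exp (1 / m) * ((S + 1) / n) := by
    have hTS : T ≤ (S + 1) / m := by
      calc T = 1 / m * ∑ i ∈ s, ρ i ^ 2 := by rw [hT, Finset.mul_sum]
        _ ≤ 1 / m * (S + 1) :=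
            mul_le_mul_of_nonneg_left (by linarith) (by positivity)
        _ = (S + 1) / m := by ring
    have hEx : (n : ℝ) / m ≤ Real.exp (1 / m) := by
      have h := Real.add_one_le_exp (1 / m)
      rw [hnm, add_div, div_self hm0]
      linarith
    have heq : (S + 1) / m = (S + 1) / n * ((n : ℝ) / m) := by
      field_simp
    calc T ≤ (S + 1) / m := hTS
      _ = (S + 1) / n * ((n : ℝ) / m) := heq
      _ ≤ (S + 1) / n * Real.exp (1 / m) :=
          mul_le_mul_of_nonneg_left hEx (by positivity)
      _ = Real.exp (1 / m) * ((S + 1) / n) := mul_comm _ _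
  set Q : ℝ := ∏ i ∈ s, ρ i with hQ
  have hQ0 : 0 ≤ Q := Finset.prod_nonneg fun i _ => hρ0' i
  have hQP : Q ^ 2 = P := by rw [hQ, hP, Finset.prod_pow]
  have hprod : ∏ i, ρ i = Q := by
    rw [hQ, hs, ← Finset.mul_prod_erase Finset.univ ρ (Finset.mem_univ 0), hρ0, one_mul]
  rw [hprod]
  have hQle : Q ≤ T ^ (m / 2) := by
    have h3 : Q = Real.sqrt P := by rw [← hQP, Real.sqrt_sq hQ0]
    rw [h3, Real.sqrt_eq_rpow]
    calc P ^ ((1:ℝ)/2) ≤ (T ^ m) ^ ((1:ℝ)/2) :=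
          Real.rpow_le_rpow hP0 h2 (by norm_num)
      _ = T ^ (m / 2) := by
          rw [← Real.rpow_mul hT0]; ring_nf
  calc Q ≤ T ^ (m / 2) := hQle
    _ ≤ (Real.exp (1 / m) * ((S + 1) / n)) ^ (m / 2) :=
        Real.rpow_le_rpow hT0 hTle (by positivity)
    _ = Real.exp (1 / m) ^ (m / 2) * ((S + 1) / n) ^ (m / 2) :=
        Real.mul_rpow (Real.exp_nonneg _) (by positivity)
    _ = Real.exp (1 / 2) * ((S + 1) / n) ^ (m / 2) := by
        rw [← Real.exp_mul]
        congr 1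
        field_simp

open Finset
open InnerProductSpace

local notation "⟪" x ", " y "⟫" => @inner ℝ _ _ x y

/-- For an invertible `B` (`n ≥ 2`, rows `b_i` a basis of a lattice of volume
`|det B|`), `∏ i, ‖b_i‖ ≤ e^(1/2) · ((S(B)+1)/n)^((n−1)/2) · |det B|`. -/
theorem stmt_13 (n : ℕ) (hn : 2 ≤ n) (B : Matrix (Fin n) (Fin n) ℝ)
    (hB : IsUnit B.det) :
    ∏ i, Real.sqrt (∑ j, (B i j) ^ 2) ≤
      Real.exp (1 / 2) * ((seysen B + 1) / n) ^ (((n : ℝ) - 1) / 2) *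
        |B.det| := by
  haveI : NeZero n := ⟨by omega⟩
  haveI wfi : WellFoundedLT (Fin n) := inferInstance
  set f : Fin n → EuclideanSpace ℝ (Fin n) :=
    fun i => (WithLp.equiv 2 (Fin n → ℝ)).symm (B i) with hf
  set g : Fin n → EuclideanSpace ℝ (Fin n) :=
    fun i => (WithLp.equiv 2 (Fin n → ℝ)).symm (fun j => B⁻¹ j i) with hg
  have hinner : ∀ x y : EuclideanSpace ℝ (Fin n), ⟪x, y⟫ = ∑ j, x j * y j := by
    intro x y
    simp [PiLp.inner_apply, RCLike.inner_apply, conj_trivial, mul_comm]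
  -- linear independence of the rows
  have hBu : IsUnit B := (Matrix.isUnit_iff_isUnit_det B).2 hB
  have hli' : LinearIndependent ℝ (fun i => B i) :=
    Matrix.linearIndependent_rows_iff_isUnit.2 hBu
  have hli : LinearIndependent ℝ f := by
    have := hli'.map' (WithLp.linearEquiv 2 ℝ (Fin n → ℝ)).symm.toLinearMap
      (LinearEquiv.ker _)
    exact this
  have hfi0 : ∀ i, f i ≠ 0 := fun i => hli.ne_zero i
  have hrank : Module.finrank ℝ (EuclideanSpace ℝ (Fin n)) = Fintype.card (Fin n) :=
    finrank_euclideanSpace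
  set e : OrthonormalBasis (Fin n) ℝ (EuclideanSpace ℝ (Fin n)) :=
    gramSchmidtOrthonormalBasis hrank f with he'
  have hne : ∀ i, gramSchmidtNormed ℝ f i ≠ 0 := by
    intro i
    have hgs : gramSchmidt ℝ f i ≠ 0 := gramSchmidt_ne_zero i hli
    rw [gramSchmidtNormed]
    exact smul_ne_zero (by simpa using hgs) hgs
  have he : ∀ i, e i = gramSchmidtNormed ℝ f i := fun i =>
    gramSchmidtOrthonormalBasis_apply hrank (hne i)
  -- dual pairing
  have hgf : ∀ i j, ⟪g i, f j⟫ = if j = i then 1 else 0 := by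
    intro i j
    rw [hinner]
    have h1 : ∑ k, (g i) k * (f j) k = ∑ k, B j k * B⁻¹ k i := by
      apply Finset.sum_congr rfl
      intro k _
      rw [hf, hg]
      simp [WithLp.equiv_symm_apply, mul_comm]
    rw [h1, ← Matrix.mul_apply, Matrix.mul_nonsing_inv B hB, Matrix.one_apply]
  set d : Fin n → ℝ := fun i => ⟪e i, f i⟫ with hd
  have key : ∀ i, ⟪g i, e i⟫ * d i = 1 := by
    intro i
    have hsum := e.sum_inner_mul_inner (g i) (f i)
    have hcollapse : ∑ j, ⟪g i, e j⟫ * ⟪e j, f i⟫ = ⟪g i, e i⟫ * ⟪e i, f i⟫ := by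
      apply Finset.sum_eq_single_of_mem i (Finset.mem_univ i)
      intro j _ hj
      rcases lt_or_gt_of_ne hj with hlt | hgt
      · -- j < i : first factor vanishes
        have hmem : e j ∈ Submodule.span ℝ (f '' Set.Iic j) := by
          rw [he j, gramSchmidtNormed]
          exact Submodule.smul_mem _ _ (gramSchmidt_mem_span ℝ f le_rfl)
        have hperp : e j ∈ (ℝ ∙ (g i))ᗮ := by
          refine Submodule.span_le.2 ?_ hmem
          rintro v ⟨k, hk, rfl⟩
          have hki : k ≠ i := ne_of_lt (lt_of_le_of_lt hk hlt)
          rw [SetLike.mem_coe, Submodule.mem_orthogonal_singleton_iff_inner_right,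
            hgf i k, if_neg hki]
        rw [Submodule.mem_orthogonal_singleton_iff_inner_right] at hperp
        rw [hperp, zero_mul]
      · -- i < j : second factor vanishes
        rw [gramSchmidtOrthonormalBasis_inv_triangular hrank f hgt, mul_zero]
    show @inner ℝ _ _ (g i) (e i) * @inner ℝ _ _ (e i) (f i) = 1
    rw [← hcollapse, hsum, hgf i i, if_pos rfl]
  have hd0 : ∀ i, d i ≠ 0 := by
    intro i h
    have := key i
    rw [h, mul_zero] at this
    exact zero_ne_one this
  have hnorme : ∀ i, ‖e i‖ = 1 := fun i => e.orthonormal.1 i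
  have hdle : ∀ i, |d i| ≤ ‖f i‖ := by
    intro i
    calc |d i| ≤ ‖e i‖ * ‖f i‖ := abs_real_inner_le_norm _ _
      _ = ‖f i‖ := by rw [hnorme i, one_mul]
  have hg1 : ∀ i, 1 ≤ ‖g i‖ * |d i| := by
    intro i
    calc (1 : ℝ) = |⟪g i, e i⟫ * d i| := by rw [key i, abs_one]
      _ = |⟪g i, e i⟫| * |d i| := abs_mul _ _
      _ ≤ ‖g i‖ * |d i| := by
          apply mul_le_mul_of_nonneg_right _ (abs_nonneg _)
          calc |⟪g i, e i⟫| ≤ ‖g i‖ * ‖e i‖ := abs_real_inner_le_norm _ _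
            _ = ‖g i‖ := by rw [hnorme i, mul_one]
  -- the determinant identity
  set std := EuclideanSpace.basisFun (Fin n) ℝ with hstd'
  have hstd : std.toBasis.det f = B.det := by
    rw [Module.Basis.det_apply]
    have hmat : std.toBasis.toMatrix f = B.transpose := by
      ext i j
      rw [Module.Basis.toMatrix_apply, OrthonormalBasis.coe_toBasis_repr_apply,
        EuclideanSpace.basisFun_repr, Matrix.transpose_apply]
      rw [hf]
      simp [WithLp.equiv_symm_apply]
    rw [hmat, Matrix.det_transpose]
  have hdet2 : std.toBasis.det f = std.toBasis.det e.toBasis * e.toBasis.det f := by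
    rw [Module.Basis.det_apply, Module.Basis.det_apply, Module.Basis.det_apply,
      ← Module.Basis.toMatrix_mul_toMatrix std.toBasis e.toBasis f, Matrix.det_mul]
  have habs1 : |std.toBasis.det e.toBasis| = 1 := by
    have h := OrthonormalBasis.det_to_matrix_orthonormalBasis (a := std) (b := e)
    rw [Real.norm_eq_abs] at h
    rw [show (⇑e.toBasis : Fin n → EuclideanSpace ℝ (Fin n)) = ⇑e from
      OrthonormalBasis.coe_toBasis e]
    exact h
  have hgsdet : e.toBasis.det f = ∏ i, d i := gramSchmidtOrthonormalBasis_det hrank f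
  have habsdet : |B.det| = ∏ i, |d i| := by
    rw [← hstd, hdet2, hgsdet, abs_mul, habs1, one_mul, Finset.abs_prod]
  -- norm identities
  have hnf : ∀ i, ‖f i‖ = Real.sqrt (∑ j, B i j ^ 2) := by
    intro i
    rw [EuclideanSpace.norm_eq]
    congr 1
    apply Finset.sum_congr rfl
    intro j _
    rw [hf]
    simp [WithLp.equiv_symm_apply, Real.norm_eq_abs, sq_abs]
  have hng : ∀ i, ‖g i‖ ^ 2 = ∑ j, B⁻¹ j i ^ 2 := by
    intro i
    rw [EuclideanSpace.norm_eq, Real.sq_sqrt (by positivity)]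
    apply Finset.sum_congr rfl
    intro j _
    rw [hg]
    simp [WithLp.equiv_symm_apply, Real.norm_eq_abs, sq_abs]
  have hseysen : seysen B = ∑ i, (‖f i‖ * ‖g i‖) ^ 2 := by
    rw [seysen]
    apply Finset.sum_congr rfl
    intro i _
    rw [mul_pow, ← hng i, hnf i, Real.sq_sqrt (by positivity)]
  -- the ratios
  set ρ : Fin n → ℝ := fun i => ‖f i‖ / |d i| with hρ
  have hdpos : ∀ i, 0 < |d i| := fun i => abs_pos.2 (hd0 i)
  have hρ1 : ∀ i, 1 ≤ ρ i := fun i => (one_le_div (hdpos i)).2 (hdle i)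
  have hρ0 : ρ 0 = 1 := by
    have hgs0 : gramSchmidt ℝ f 0 = f 0 := by
      rw [gramSchmidt_def]
      have hIio : Finset.Iio (0 : Fin n) = ∅ := by
        ext x
        simp [Finset.mem_Iio]
      simp [hIio]
    have he0 : e 0 = (‖f 0‖ : ℝ)⁻¹ • f 0 := by
      rw [he 0, gramSchmidtNormed, hgs0]
      norm_num
    have hn0 : ‖f 0‖ ≠ 0 := norm_ne_zero_iff.2 (hfi0 0)
    have hd00 : d 0 = ‖f 0‖ := by
      rw [hd]
      simp only []
      rw [he0, real_inner_smul_left, real_inner_self_eq_norm_sq]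
      field_simp
    rw [hρ]
    simp only []
    rw [hd00, abs_of_nonneg (norm_nonneg _), div_self hn0]
  have hρα : ∀ i, ρ i ≤ ‖f i‖ * ‖g i‖ := by
    intro i
    rw [hρ]
    simp only []
    rw [div_le_iff₀ (hdpos i)]
    calc ‖f i‖ = ‖f i‖ * 1 := (mul_one _).symm
      _ ≤ ‖f i‖ * (‖g i‖ * |d i|) :=
          mul_le_mul_of_nonneg_left (hg1 i) (norm_nonneg _)
      _ = ‖f i‖ * ‖g i‖ * |d i| := by ring
  have hS0 : 0 ≤ seysen B := by
    rw [hseysen]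
    exact Finset.sum_nonneg fun i _ => by positivity
  have hsumρ : ∑ i ∈ Finset.univ.erase (0 : Fin n), ρ i ^ 2 ≤ seysen B := by
    rw [hseysen]
    calc ∑ i ∈ Finset.univ.erase (0 : Fin n), ρ i ^ 2
        ≤ ∑ i ∈ Finset.univ.erase (0 : Fin n), (‖f i‖ * ‖g i‖) ^ 2 :=
          Finset.sum_le_sum fun i _ =>
            pow_le_pow_left₀ (le_trans zero_le_one (hρ1 i)) (hρα i) 2
      _ ≤ ∑ i, (‖f i‖ * ‖g i‖) ^ 2 :=
          Finset.sum_le_sum_of_subset_of_nonneg (Finset.subset_univ _)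
            (fun i _ _ => by positivity)
  have hC := amgm_step n hn ρ (seysen B) hρ1 hρ0 hsumρ hS0
  -- assemble
  have hlhs : ∏ i, Real.sqrt (∑ j, B i j ^ 2) = (∏ i, ρ i) * |B.det| := by
    rw [habsdet, ← Finset.prod_mul_distrib]
    apply Finset.prod_congr rfl
    intro i _
    rw [← hnf i, hρ]
    simp only []
    rw [div_mul_cancel₀ _ (ne_of_gt (hdpos i))]
  rw [hlhs]
  exact mul_le_mul_of_nonneg_right hC (abs_nonneg _)
end

section
/- Let n ≥ 2 and let B be an invertible n×n real matrix with rows b_1, …, b_n. Define the orthogonality defect od(B) = 1 − det(B·Bᵗ)/∏_{i=1}^n ‖b_i‖². Then od(B) ≤ 1 − (1/e) · (n/(S(B)+1))^{n−1}. -/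
open Matrix

set_option maxHeartbeats 1000000

lemma amgm {ι : Type*} (s : Finset ι) (hs : s.Nonempty) (f : ι → ℝ)
    (hf : ∀ i ∈ s, 0 ≤ f i) :
    ∏ i ∈ s, f i ≤ ((∑ i ∈ s, f i) / s.card) ^ (s.card) := by
  have hk : (0:ℝ) < s.card := by exact_mod_cast Finset.card_pos.mpr hs
  have h := Real.geom_mean_le_arith_mean_weighted s (fun _ => (s.card : ℝ)⁻¹) f
    (fun i _ => by positivity) (by simp [Finset.card_ne_zero_of_mem, mul_comm]; field_simp) hf
  rw [Real.finset_prod_rpow s f hf] at h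
  have h2 : ∑ i ∈ s, (s.card:ℝ)⁻¹ * f i = (∑ i ∈ s, f i) / s.card := by
    rw [← Finset.mul_sum]; ring
  rw [h2] at h
  have hP : 0 ≤ ∏ i ∈ s, f i := Finset.prod_nonneg hf
  calc ∏ i ∈ s, f i = ((∏ i ∈ s, f i) ^ ((s.card:ℝ)⁻¹)) ^ (s.card) := by
        rw [Real.rpow_inv_natCast_pow hP (by positivity : 0 < s.card).ne']
    _ ≤ ((∑ i ∈ s, f i) / s.card) ^ (s.card) := by
        apply pow_le_pow_left₀ (Real.rpow_nonneg hP _) h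


variable {n : ℕ}

instance : WellFoundedLT (Fin n) := inferInstance

lemma lowerInv_diag_one {S : Matrix (Fin n) (Fin n) ℝ} (hS : S.PosDef) (i : Fin n) :
    LDL.lowerInv hS i i = 1 := by
  letI := Matrix.toNormedAddCommGroup _ hS.transpose
  letI := Matrix.toInnerProductSpace _ hS.transpose.posSemidef
  have h : LDL.lowerInv hS i =
      InnerProductSpace.gramSchmidt ℝ (fun k => ((Pi.basisFun ℝ (Fin n)) : Fin n → (Fin n → ℝ)) k) i := rfl
  rw [h, InnerProductSpace.gramSchmidt_def]
  simp only [Pi.sub_apply, Finset.sum_apply, Pi.basisFun_apply, Pi.single_eq_same]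
  rw [sub_eq_self]
  refine Finset.sum_eq_zero fun j hj => ?_
  rw [Submodule.starProjection_singleton]
  have hji : InnerProductSpace.gramSchmidt ℝ (fun k => ((Pi.basisFun ℝ (Fin n)) : Fin n → (Fin n → ℝ)) k) j i
      = 0 := LDL.lowerInv_triangular hS (Finset.mem_Iio.mp hj)
  simp only [Pi.basisFun_apply] at hji
  simp only [Pi.smul_apply, hji, smul_eq_mul, mul_zero]


lemma posDef_det_le_prod_diag {S : Matrix (Fin n) (Fin n) ℝ} (hS : S.PosDef) :
    S.det ≤ ∏ i, S i i := by
  have htri : (LDL.lowerInv hS).BlockTriangular OrderDual.toDual := fun i j hij =>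
    LDL.lowerInv_triangular hS hij
  have hdetL' : (LDL.lowerInv hS).det = 1 := by
    rw [Matrix.det_of_lowerTriangular _ htri]
    simp [lowerInv_diag_one hS]
  haveI : Invertible (LDL.lowerInv hS) :=
    Matrix.invertibleOfIsUnitDet _ (by rw [hdetL']; exact isUnit_one)
  have htriL : ((LDL.lowerInv hS)⁻¹).BlockTriangular OrderDual.toDual :=
    Matrix.blockTriangular_inv_of_blockTriangular htri
  have hLdiag : ∀ i, (LDL.lowerInv hS)⁻¹ i i = 1 := by
    intro i
    have h1 : ((LDL.lowerInv hS)⁻¹ * LDL.lowerInv hS) i i = 1 := by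
      rw [Matrix.inv_mul_of_invertible]; simp [Matrix.one_apply]
    rw [Matrix.mul_apply, Finset.sum_eq_single i] at h1
    · rwa [lowerInv_diag_one hS, mul_one] at h1
    · intro j _ hji
      rcases lt_or_gt_of_ne hji with h | h
      · rw [LDL.lowerInv_triangular hS h, mul_zero]
      · rw [htriL h, zero_mul]
    · simp
  have elow : LDL.lower hS = (LDL.lowerInv hS)⁻¹ := by unfold LDL.lower; congr!
  have ediag : LDL.diag hS = Matrix.diagonal (LDL.diagEntries hS) := by
    unfold LDL.diag; congr!
  have hdnn : ∀ i, 0 ≤ LDL.diagEntries hS i := by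
    intro i
    have h1 : LDL.diagEntries hS i = (LDL.lowerInv hS * S * (LDL.lowerInv hS)ᴴ) i i := by
      rw [← LDL.diag_eq_lowerInv_conj hS, ediag, Matrix.diagonal_apply_eq]
    have h2 : (LDL.lowerInv hS * S * (LDL.lowerInv hS)ᴴ) i i =
        star (LDL.lowerInv hS i) ⬝ᵥ (S *ᵥ LDL.lowerInv hS i) := by
      simp only [Matrix.mul_apply, Matrix.conjTranspose_apply, Matrix.mulVec, dotProduct,
        star_trivial, Finset.sum_mul, Finset.mul_sum]
      rw [Finset.sum_comm]
      exact Finset.sum_congr rfl fun j _ => Finset.sum_congr rfl fun k _ => by ring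
    rw [h1, h2]
    exact hS.posSemidef.dotProduct_mulVec_nonneg (LDL.lowerInv hS i)
  have hdet : S.det = ∏ i, LDL.diagEntries hS i := by
    conv_lhs => rw [← LDL.lower_conj_diag hS]
    rw [Matrix.det_mul, Matrix.det_mul, Matrix.det_conjTranspose]
    have hdl : (LDL.lower hS).det = 1 := by
      rw [elow, Matrix.det_nonsing_inv, hdetL']
      simp
    rw [hdl, star_trivial, ediag, Matrix.det_diagonal]
    ring
  have hSii : ∀ i, LDL.diagEntries hS i ≤ S i i := by
    intro i
    have h1 : S i i = ∑ j, LDL.lower hS i j * LDL.diagEntries hS j * LDL.lower hS i j := by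
      conv_lhs => rw [← LDL.lower_conj_diag hS]
      simp only [Matrix.mul_apply, Matrix.conjTranspose_apply, star_trivial, ediag,
        Matrix.diagonal_apply, mul_ite, mul_zero, ite_mul, zero_mul,
        Finset.sum_ite_eq, Finset.sum_ite_eq', Finset.mem_univ, if_true]
    have h2 : LDL.diagEntries hS i =
        LDL.lower hS i i * LDL.diagEntries hS i * LDL.lower hS i i := by
      rw [elow, hLdiag i]; ring
    rw [h1, h2]
    exact Finset.single_le_sum
      (f := fun j => LDL.lower hS i j * LDL.diagEntries hS j * LDL.lower hS i j)
      (fun j _ => by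
        show 0 ≤ LDL.lower hS i j * LDL.diagEntries hS j * LDL.lower hS i j
        nlinarith [mul_nonneg (hdnn j) (sq_nonneg (LDL.lower hS i j))]) (Finset.mem_univ i)
  rw [hdet]
  exact Finset.prod_le_prod (fun i _ => hdnn i) fun i _ => hSii i

lemma det_sq_le_prod_row_sq {M : Matrix (Fin n) (Fin n) ℝ} (h : IsUnit M.det) :
    M.det ^ 2 ≤ ∏ i, ∑ j, (M i j) ^ 2 := by
  have hpd : (M * Mᵀ).PosDef := by
    refine Matrix.PosDef.of_dotProduct_mulVec_pos ?_ ?_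
    · show (M * Mᵀ)ᴴ = M * Mᵀ
      rw [Matrix.conjTranspose_eq_transpose_of_trivial, Matrix.transpose_mul,
        Matrix.transpose_transpose]
    · intro x hx
      have hy : Mᵀ *ᵥ x ≠ 0 := by
        have hinj : Function.Injective (Mᵀ).mulVec := by
          rw [Matrix.mulVec_injective_iff_isUnit, Matrix.isUnit_iff_isUnit_det,
            Matrix.det_transpose]
          exact h
        intro h0
        exact hx (hinj (by simpa using h0))
      have key : star x ⬝ᵥ ((M * Mᵀ) *ᵥ x) = (Mᵀ *ᵥ x) ⬝ᵥ (Mᵀ *ᵥ x) := by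
        rw [star_trivial, ← Matrix.mulVec_mulVec, Matrix.dotProduct_mulVec,
          ← Matrix.mulVec_transpose]
      rw [key]
      rcases (dotProduct_self_eq_zero (v := Mᵀ *ᵥ x)).not.mpr hy with hne
      have hnn : 0 ≤ (Mᵀ *ᵥ x) ⬝ᵥ (Mᵀ *ᵥ x) := Finset.sum_nonneg fun i _ => mul_self_nonneg _
      exact lt_of_le_of_ne hnn (Ne.symm hne)
  have hle := posDef_det_le_prod_diag hpd
  rw [Matrix.det_mul, Matrix.det_transpose] at hle
  calc M.det ^ 2 = M.det * M.det := sq M.det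
    _ ≤ ∏ i, (M * Mᵀ) i i := hle
    _ = ∏ i, ∑ j, (M i j) ^ 2 := by
      refine Finset.prod_congr rfl fun i _ => ?_
      simp [Matrix.mul_apply, sq]


/-- The orthogonality defect `od(B) = 1 − det(B·Bᵗ)/∏ i ‖b_i‖²` of an
invertible `B` (`n ≥ 2`) satisfies `od(B) ≤ 1 − (1/e)(n/(S(B)+1))^(n−1)`. -/
theorem stmt_14 (n : ℕ) (hn : 2 ≤ n) (B : Matrix (Fin n) (Fin n) ℝ)
    (hB : IsUnit B.det) :
    1 - (B * Bᵀ).det / ∏ i, (∑ j, (B i j) ^ 2) ≤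
      1 - (1 / Real.exp 1) * ((n : ℝ) / (seysen B + 1)) ^ (n - 1) := by
  have hn0 : 0 < n := by omega
  have i0 : Fin n := ⟨0, hn0⟩
  set p : Fin n → ℝ := fun i => ∑ j, (B i j) ^ 2 with hpdef
  set q : Fin n → ℝ := fun i => ∑ j, (B⁻¹ j i) ^ 2 with hqdef
  -- step 1 : 1 ≤ p i * q i
  have h1 : ∀ i, 1 ≤ p i * q i := by
    intro i
    have hcs := Finset.sum_mul_sq_le_sq_mul_sq Finset.univ (fun j => B i j) (fun j => B⁻¹ j i)
    have hd : ∑ j, B i j * B⁻¹ j i = 1 := by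
      have : (B * B⁻¹) i i = (1 : Matrix (Fin n) (Fin n) ℝ) i i := by
        rw [Matrix.mul_nonsing_inv B hB]
      rw [Matrix.mul_apply] at this
      rw [this, Matrix.one_apply_eq]
    rw [hd] at hcs
    simpa using hcs
  have hp : ∀ i, 0 < p i := by
    intro i
    rcases lt_or_eq_of_le (Finset.sum_nonneg (fun j (_ : j ∈ Finset.univ) =>
      sq_nonneg (B i j)) : 0 ≤ p i) with h | h
    · exact h
    · exfalso; have := h1 i
      have hpi : p i = 0 := h.symm
      rw [hpi, zero_mul] at this; linarith
  have hq : ∀ i, 0 < q i := by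
    intro i
    rcases lt_or_eq_of_le (Finset.sum_nonneg (fun j (_ : j ∈ Finset.univ) =>
      sq_nonneg (B⁻¹ j i)) : 0 ≤ q i) with h | h
    · exact h
    · exfalso; have := h1 i
      have hqi : q i = 0 := h.symm
      rw [hqi, mul_zero] at this; linarith
  have hdB : B.det ≠ 0 := hB.ne_zero
  -- the modified dual matrix
  set C := ((B⁻¹)ᵀ).updateRow i0 (fun k => B i0 k / p i0) with hCdef
  have hcomb : (fun m => B i0 m / p i0)
      = ∑ k, ((∑ l, B i0 l * B k l) / p i0) • (B⁻¹)ᵀ k := by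
    funext m
    have key : ∑ k, (∑ l, B i0 l * B k l) * B⁻¹ m k = B i0 m := by
      have hAB : B⁻¹ * B = 1 := Matrix.nonsing_inv_mul B hB
      have h2 : ∀ l, (∑ k, B⁻¹ m k * B k l) = (1 : Matrix (Fin n) (Fin n) ℝ) m l := fun l => by
        rw [← hAB, Matrix.mul_apply]
      calc ∑ k, (∑ l, B i0 l * B k l) * B⁻¹ m k
          = ∑ l, B i0 l * (∑ k, B⁻¹ m k * B k l) := by
            simp only [Finset.sum_mul, Finset.mul_sum]
            rw [Finset.sum_comm]
            exact Finset.sum_congr rfl fun l _ => Finset.sum_congr rfl fun k _ => by ring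
        _ = B i0 m := by
            simp only [h2, Matrix.one_apply, mul_ite, mul_one, mul_zero]
            simp
    simp only [Finset.sum_apply, Pi.smul_apply, Matrix.transpose_apply, smul_eq_mul]
    calc B i0 m / p i0 = (∑ k, (∑ l, B i0 l * B k l) * B⁻¹ m k) / p i0 := by rw [key]
      _ = ∑ k, (∑ l, B i0 l * B k l) / p i0 * B⁻¹ m k := by
          rw [Finset.sum_div]
          exact Finset.sum_congr rfl fun k _ => by ring
  have hCdet : C.det = (B.det)⁻¹ := by
    rw [hCdef, hcomb, Matrix.det_updateRow_sum ((B⁻¹)ᵀ) i0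
      (fun k => (∑ l, B i0 l * B k l) / p i0)]
    have hc0 : (∑ l, B i0 l * B i0 l) / p i0 = 1 := by
      have : ∑ l, B i0 l * B i0 l = p i0 := Finset.sum_congr rfl fun l _ => (sq (B i0 l)).symm
      rw [this, div_self (hp i0).ne']
    rw [hc0, one_smul, Matrix.det_transpose, Matrix.det_nonsing_inv, Ring.inverse_eq_inv']
  have hCunit : IsUnit C.det := by
    rw [hCdet]
    exact isUnit_iff_ne_zero.mpr (inv_ne_zero hdB)
  have hHad := det_sq_le_prod_row_sq hCunit
  rw [hCdet] at hHad
  have hrows : ∏ i, ∑ j, (C i j) ^ 2 = (p i0)⁻¹ * ∏ i ∈ Finset.univ.erase i0, q i := by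
    rw [← Finset.mul_prod_erase Finset.univ _ (Finset.mem_univ i0)]
    congr 1
    · rw [hCdef]
      simp only [Matrix.updateRow_self]
      simp only [div_pow]
      rw [← Finset.sum_div]
      have hnum : ∑ x, (B i0 x) ^ 2 = p i0 := rfl
      rw [hnum, sq, div_mul_cancel_left₀ (hp i0).ne']
    · refine Finset.prod_congr rfl fun i hi => ?_
      have hine : i ≠ i0 := (Finset.mem_erase.mp hi).1
      rw [hCdef]
      simp [Matrix.updateRow_ne hine]; rfl
  rw [hrows] at hHad
  set Qe := ∏ i ∈ Finset.univ.erase i0, q i with hQe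
  set Pe := ∏ i ∈ Finset.univ.erase i0, p i with hPe
  have hQe0 : 0 < Qe := Finset.prod_pos fun i _ => hq i
  have hPe0 : 0 < Pe := Finset.prod_pos fun i _ => hp i
  have hdet2 : p i0 / Qe ≤ B.det ^ 2 := by
    have h0 : (0:ℝ) < (B.det ^ 2)⁻¹ := by positivity
    have h1' : (B.det ^ 2)⁻¹ ≤ (p i0)⁻¹ * Qe := by rw [← inv_pow]; exact hHad
    have h2' := inv_anti₀ h0 h1'
    rw [inv_inv, mul_inv, inv_inv] at h2'
    rw [div_eq_mul_inv]
    exact h2'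
  have hprodpq : ∏ i ∈ Finset.univ.erase i0, (p i * q i) = Pe * Qe :=
    Finset.prod_mul_distrib
  have hGpos : 0 < ∏ i ∈ Finset.univ.erase i0, (p i * q i) :=
    Finset.prod_pos fun i _ => lt_of_lt_of_le one_pos (h1 i)
  have hprodp : ∏ i, p i = p i0 * Pe :=
    (Finset.mul_prod_erase _ _ (Finset.mem_univ i0)).symm
  have hPpos : 0 < ∏ i, p i := Finset.prod_pos fun i _ => hp i
  have hratio : 1 / ∏ i ∈ Finset.univ.erase i0, (p i * q i) ≤ (B * Bᵀ).det / ∏ i, p i := by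
    rw [Matrix.det_mul, Matrix.det_transpose, ← sq]
    rw [div_le_div_iff₀ hGpos hPpos]
    have heq : (p i0 / Qe) * (∏ i ∈ Finset.univ.erase i0, (p i * q i)) = p i0 * Pe := by
      rw [hprodpq]
      field_simp
    calc 1 * ∏ i, p i = p i0 * Pe := by rw [one_mul, hprodp]
      _ = (p i0 / Qe) * (∏ i ∈ Finset.univ.erase i0, (p i * q i)) := heq.symm
      _ ≤ B.det ^ 2 * (∏ i ∈ Finset.univ.erase i0, (p i * q i)) :=
          mul_le_mul_of_nonneg_right hdet2 hGpos.le
  -- AM-GM side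
  have hcard : (Finset.univ.erase i0).card = n - 1 := by
    rw [Finset.card_erase_of_mem (Finset.mem_univ i0), Finset.card_univ, Fintype.card_fin]
  have hnonempty : (Finset.univ.erase i0).Nonempty := by
    rw [← Finset.card_pos, hcard]; omega
  have hamgm := amgm _ hnonempty (fun i => p i * q i)
    (fun i _ => le_trans zero_le_one (h1 i))
  rw [hcard] at hamgm
  set S := seysen B with hSdef
  have hSsum : S = ∑ i, p i * q i := rfl
  have hk : ((n-1 : ℕ):ℝ) = (n:ℝ) - 1 := by
    rw [Nat.cast_sub (by omega), Nat.cast_one]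
  rw [hk] at hamgm
  have hκ : (0:ℝ) < (n:ℝ) - 1 := by
    have : (2:ℝ) ≤ (n:ℝ) := by exact_mod_cast hn
    linarith
  have hn0' : (0:ℝ) < (n:ℝ) := by positivity
  have hT : ∑ i ∈ Finset.univ.erase i0, (p i * q i) = S - p i0 * q i0 := by
    rw [hSsum, ← Finset.add_sum_erase _ _ (Finset.mem_univ i0)]; ring
  have hT0 : 0 ≤ ∑ i ∈ Finset.univ.erase i0, (p i * q i) :=
    Finset.sum_nonneg fun i _ => le_trans zero_le_one (h1 i)
  have hT1 : ∑ i ∈ Finset.univ.erase i0, (p i * q i) ≤ S - 1 := by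
    rw [hT]; have := h1 i0; linarith
  have hSn : (n:ℝ) ≤ S := by
    rw [hSsum]
    calc (n:ℝ) = ∑ _i : Fin n, (1:ℝ) := by simp
      _ ≤ ∑ i, p i * q i := Finset.sum_le_sum fun i _ => h1 i
  have hSpos : (0:ℝ) < S + 1 := by
    have : (2:ℝ) ≤ (n:ℝ) := by exact_mod_cast hn
    linarith
  have hG : ∏ i ∈ Finset.univ.erase i0, (p i * q i)
      ≤ Real.exp 1 * ((S+1)/(n:ℝ))^(n-1) := by
    have hstep1 : ((∑ i ∈ Finset.univ.erase i0, (p i * q i)) / ((n:ℝ)-1))^(n-1)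
        ≤ ((S-1)/((n:ℝ)-1))^(n-1) := by
      apply pow_le_pow_left₀ (div_nonneg hT0 hκ.le)
      gcongr
    have hstep2 : ((S-1)/((n:ℝ)-1))^(n-1)
        ≤ (((S+1)/(n:ℝ)) * ((n:ℝ)/((n:ℝ)-1)))^(n-1) := by
      apply pow_le_pow_left₀ (div_nonneg (by linarith) hκ.le)
      have hre : ((S+1)/(n:ℝ)) * ((n:ℝ)/((n:ℝ)-1)) = (S+1)/((n:ℝ)-1) := by
        field_simp
      rw [hre]
      gcongr
      linarith
    have hexp : ((n:ℝ)/((n:ℝ)-1))^(n-1) ≤ Real.exp 1 := by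
      have h2 : (n:ℝ)/((n:ℝ)-1) = 1 + 1/((n:ℝ)-1) := by field_simp; ring
      have h3 : 1 + 1/((n:ℝ)-1) ≤ Real.exp (1/((n:ℝ)-1)) := by
        have := Real.add_one_le_exp (1/((n:ℝ)-1)); linarith
      calc ((n:ℝ)/((n:ℝ)-1))^(n-1) ≤ (Real.exp (1/((n:ℝ)-1)))^(n-1) := by
            apply pow_le_pow_left₀ (by positivity) (by rw [h2]; exact h3)
        _ = Real.exp (((n-1:ℕ):ℝ) * (1/((n:ℝ)-1))) := (Real.exp_nat_mul _ _).symm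
        _ = Real.exp 1 := by rw [hk]; congr 1; field_simp
    calc ∏ i ∈ Finset.univ.erase i0, (p i * q i)
        ≤ ((∑ i ∈ Finset.univ.erase i0, (p i * q i)) / ((n:ℝ)-1))^(n-1) := hamgm
      _ ≤ ((S-1)/((n:ℝ)-1))^(n-1) := hstep1
      _ ≤ (((S+1)/(n:ℝ)) * ((n:ℝ)/((n:ℝ)-1)))^(n-1) := hstep2
      _ = ((S+1)/(n:ℝ))^(n-1) * ((n:ℝ)/((n:ℝ)-1))^(n-1) := mul_pow _ _ _
      _ ≤ ((S+1)/(n:ℝ))^(n-1) * Real.exp 1 :=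
          mul_le_mul_of_nonneg_left hexp (pow_nonneg (by positivity) _)
      _ = Real.exp 1 * ((S+1)/(n:ℝ))^(n-1) := mul_comm _ _
  have hexp0 : Real.exp 1 ≠ 0 := (Real.exp_pos 1).ne'
  have hfinal : 1/Real.exp 1 * ((n:ℝ)/(S+1))^(n-1) ≤ (B * Bᵀ).det / ∏ i, p i := by
    refine le_trans ?_ hratio
    rw [le_div_iff₀ hGpos]
    calc 1/Real.exp 1 * ((n:ℝ)/(S+1))^(n-1) * (∏ i ∈ Finset.univ.erase i0, (p i * q i))
        ≤ 1/Real.exp 1 * ((n:ℝ)/(S+1))^(n-1) * (Real.exp 1 * ((S+1)/(n:ℝ))^(n-1)) := by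
          apply mul_le_mul_of_nonneg_left hG (by positivity)
      _ = (((n:ℝ)/(S+1)) * ((S+1)/(n:ℝ)))^(n-1) * (Real.exp 1 * (1/Real.exp 1)) := by
          rw [mul_pow]; ring
      _ = 1 := by
          have hxy : (n:ℝ)/(S+1) * ((S+1)/(n:ℝ)) = 1 := by
            field_simp
          rw [hxy, one_pow, mul_one_div, div_self hexp0, one_mul]
  exact sub_le_sub_left hfinal 1
end
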